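/- arXiv:2003.08192 — 2 statements merged into one kernel-verified Lean document; each statement's English description precedes it below -/
import Mathlib

section
/- For every permutation σ of [n], inv(σ) = exc(σ) + ucross(σ) + 2·unest(σ) + lcross(σ) + ljoin(σ) + 2·lnest(σ) + 2·lpsnest(σ); equivalently, inv(σ) = cval(σ) + cdrise(σ) + cdfall(σ) + ucross(σ) + lcross(σ) + 2·(unest(σ) + lnest(σ) + psnest(σ)). -/
namespace Paper

/-! ### Motzkin paths, Dyck paths, and Flajolet's continued-fraction weights -/

inductive MStep : Type
  | up : MStep
  | down : MStep
  | flat : MStep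
  deriving DecidableEq

instance : Fintype MStep :=
  ⟨{MStep.up, MStep.down, MStep.flat}, fun x => by cases x <;> simp⟩

noncomputable section

/-- Height increment of a single step. -/
def MStep.val : MStep → ℤ
  | .up => 1
  | .down => -1
  | .flat => 0

/-- The height of the lattice path `ω` after its first `i` steps. -/
def height {n : ℕ} (ω : Fin n → MStep) (i : ℕ) : ℤ :=
  ∑ j ∈ Finset.univ.filter (fun j : Fin n => (j : ℕ) < i), (ω j).val

open Classical in
/-- Motzkin paths of length `n`: lattice paths from `(0,0)` to `(n,0)` with steps
`(1,1)`, `(1,-1)` and `(1,0)`, staying at heights `≥ 0`. -/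
def motzkinPaths (n : ℕ) : Finset (Fin n → MStep) :=
  Finset.univ.filter fun ω =>
    (∀ i ∈ Finset.range (n + 1), 0 ≤ height ω i) ∧ height ω n = 0

/-- Dyck paths of length `n`: Motzkin paths having no level step. -/
def dyckPaths (n : ℕ) : Finset (Fin n → MStep) :=
  (motzkinPaths n).filter fun ω => ∀ i, ω i ≠ MStep.flat

/-- The weight of a Motzkin path for the J-type continued fraction with coefficients
`γ` (one factor `γ h` for each level step at height `h`) and `β` (one factor `β h`
for each fall starting at height `h`); rises have weight `1`. -/
def jweight {R : Type*} [CommRing R] {n : ℕ} (γ β : ℕ → R) (ω : Fin n → MStep) : R :=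
  ∏ i : Fin n,
    match ω i with
    | MStep.up => (1 : R)
    | MStep.down => β (height ω (i : ℕ)).toNat
    | MStep.flat => γ (height ω (i : ℕ)).toNat

/-- The weight of a Dyck path for the S-type continued fraction with coefficients `α`
(one factor `α h` for each fall starting at height `h`); rises have weight `1`. -/
def sweight {R : Type*} [CommRing R] {n : ℕ} (α : ℕ → R) (ω : Fin n → MStep) : R :=
  ∏ i : Fin n,
    match ω i with
    | MStep.up => (1 : R)
    | MStep.down => α (height ω (i : ℕ)).toNat
    | MStep.flat => (0 : R)

/-- The `(p,q)`-integer `[m]_{p,q} = ∑_{j=0}^{m-1} p^j q^(m-1-j)`. -/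
def qint {R : Type*} [CommRing R] (p q : R) (m : ℕ) : R :=
  ∑ j ∈ Finset.range m, p ^ j * q ^ (m - 1 - j)

/-- `starSum f m = ∑_{ℓ=0}^{m} f ℓ (m-ℓ)`. -/
def starSum {R : Type*} [CommRing R] (f : ℕ → ℕ → R) (m : ℕ) : R :=
  ∑ ℓ ∈ Finset.range (m + 1), f ℓ (m - ℓ)

/-- `rowSum f m = ∑_{ℓ=0}^{m} f m ℓ`. -/
def rowSum {R : Type*} [CommRing R] (f : ℕ → ℕ → R) (m : ℕ) : R :=
  ∑ ℓ ∈ Finset.range (m + 1), f m ℓ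

/-! ### Generic counting helpers -/

/-- The number of indices `i : Fin n` satisfying `P i`. -/
def cnt {n : ℕ} (P : Fin n → Prop) : ℕ := Nat.card {i : Fin n // P i}

/-- The number of quadruplets `i < j < k < l` satisfying `C i j k l`. -/
def quad {n : ℕ} (C : Fin n → Fin n → Fin n → Fin n → Prop) : ℕ :=
  Nat.card {q : Fin n × Fin n × Fin n × Fin n //
    q.1 < q.2.1 ∧ q.2.1 < q.2.2.1 ∧ q.2.2.1 < q.2.2.2 ∧ C q.1 q.2.1 q.2.2.1 q.2.2.2}

/-- The number of triplets `i < j < l` satisfying `C i j l`. -/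
def trip {n : ℕ} (C : Fin n → Fin n → Fin n → Prop) : ℕ :=
  Nat.card {q : Fin n × Fin n × Fin n // q.1 < q.2.1 ∧ q.2.1 < q.2.2 ∧ C q.1 q.2.1 q.2.2}

/-! ### Permutation statistics -/

variable {n : ℕ}

/-- `i` is a record of `σ`. -/
def isRec (σ : Equiv.Perm (Fin n)) (i : Fin n) : Prop := ∀ j, j < i → σ j < σ i

/-- `i` is an antirecord of `σ`. -/
def isArec (σ : Equiv.Perm (Fin n)) (i : Fin n) : Prop := ∀ j, i < j → σ i < σ j

/-- `i` is an exclusive record of `σ`. -/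
def isERec (σ : Equiv.Perm (Fin n)) (i : Fin n) : Prop := isRec σ i ∧ ¬ isArec σ i

/-- `i` is an exclusive antirecord of `σ`. -/
def isEArec (σ : Equiv.Perm (Fin n)) (i : Fin n) : Prop := isArec σ i ∧ ¬ isRec σ i

/-- `i` is a neither-record-antirecord of `σ`. -/
def isNrar (σ : Equiv.Perm (Fin n)) (i : Fin n) : Prop := ¬ isRec σ i ∧ ¬ isArec σ i

/-- `i` is a cycle valley of `σ`. -/
def isCval (σ : Equiv.Perm (Fin n)) (i : Fin n) : Prop := i < σ i ∧ i < σ⁻¹ i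

/-- `i` is a cycle peak of `σ`. -/
def isCpeak (σ : Equiv.Perm (Fin n)) (i : Fin n) : Prop := σ i < i ∧ σ⁻¹ i < i

/-- `i` is a cycle double rise of `σ`. -/
def isCdrise (σ : Equiv.Perm (Fin n)) (i : Fin n) : Prop := σ⁻¹ i < i ∧ i < σ i

/-- `i` is a cycle double fall of `σ`. -/
def isCdfall (σ : Equiv.Perm (Fin n)) (i : Fin n) : Prop := σ i < i ∧ i < σ⁻¹ i

/-- `i` is a fixed point of `σ`. -/
def isFix (σ : Equiv.Perm (Fin n)) (i : Fin n) : Prop := σ i = i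

instance (σ : Equiv.Perm (Fin n)) : DecidablePred (isCval σ) := fun i =>
  inferInstanceAs (Decidable (i < σ i ∧ i < σ⁻¹ i))

instance (σ : Equiv.Perm (Fin n)) : DecidablePred (isCpeak σ) := fun i =>
  inferInstanceAs (Decidable (σ i < i ∧ σ⁻¹ i < i))

instance (σ : Equiv.Perm (Fin n)) : DecidablePred (isCdrise σ) := fun i =>
  inferInstanceAs (Decidable (σ⁻¹ i < i ∧ i < σ i))

instance (σ : Equiv.Perm (Fin n)) : DecidablePred (isCdfall σ) := fun i =>
  inferInstanceAs (Decidable (σ i < i ∧ i < σ⁻¹ i))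

instance (σ : Equiv.Perm (Fin n)) : DecidablePred (isFix σ) := fun i =>
  inferInstanceAs (Decidable (σ i = i))

/-- The number of excedances of `σ`. -/
def exc (σ : Equiv.Perm (Fin n)) : ℕ := cnt fun i => i < σ i

/-- The number of antirecords of `σ`. -/
def arec (σ : Equiv.Perm (Fin n)) : ℕ := cnt (isArec σ)

/-- The number of exclusive records of `σ`. -/
def erec (σ : Equiv.Perm (Fin n)) : ℕ := cnt (isERec σ)

/-- The number of inversions of `σ`. -/
def inversions (σ : Equiv.Perm (Fin n)) : ℕ :=
  Nat.card {p : Fin n × Fin n // p.1 < p.2 ∧ σ p.2 < σ p.1}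

/-- The number of cycles of `σ` (fixed points included). -/
def cyc (σ : Equiv.Perm (Fin n)) : ℕ := σ.cycleType.card + cnt (isFix σ)

/-- The level of an index `i`: `#{j < i : σ j > i}`. -/
def levAt (σ : Equiv.Perm (Fin n)) (i : Fin n) : ℕ := cnt fun j => j < i ∧ i < σ j

def eareccpeak (σ : Equiv.Perm (Fin n)) : ℕ := cnt fun i => isEArec σ i ∧ isCpeak σ i
def eareccdfall (σ : Equiv.Perm (Fin n)) : ℕ := cnt fun i => isEArec σ i ∧ isCdfall σ i
def ereccval (σ : Equiv.Perm (Fin n)) : ℕ := cnt fun i => isERec σ i ∧ isCval σ i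
def ereccdrise (σ : Equiv.Perm (Fin n)) : ℕ := cnt fun i => isERec σ i ∧ isCdrise σ i
def nrcpeak (σ : Equiv.Perm (Fin n)) : ℕ := cnt fun i => isNrar σ i ∧ isCpeak σ i
def nrcdfall (σ : Equiv.Perm (Fin n)) : ℕ := cnt fun i => isNrar σ i ∧ isCdfall σ i
def nrcval (σ : Equiv.Perm (Fin n)) : ℕ := cnt fun i => isNrar σ i ∧ isCval σ i
def nrcdrise (σ : Equiv.Perm (Fin n)) : ℕ := cnt fun i => isNrar σ i ∧ isCdrise σ i

/-- The number of upper crossings of `σ`. -/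
def ucross (σ : Equiv.Perm (Fin n)) : ℕ := quad fun i j k l => σ i = k ∧ σ j = l
/-- The number of lower crossings of `σ`. -/
def lcross (σ : Equiv.Perm (Fin n)) : ℕ := quad fun i j k l => σ k = i ∧ σ l = j
/-- The number of upper nestings of `σ`. -/
def unest (σ : Equiv.Perm (Fin n)) : ℕ := quad fun i j k l => σ i = l ∧ σ j = k
/-- The number of lower nestings of `σ`. -/
def lnest (σ : Equiv.Perm (Fin n)) : ℕ := quad fun i j k l => σ l = i ∧ σ k = j
/-- The number of upper joinings of `σ`. -/
def ujoin (σ : Equiv.Perm (Fin n)) : ℕ := trip fun i j l => σ i = j ∧ σ j = l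
/-- The number of lower joinings of `σ`. -/
def ljoin (σ : Equiv.Perm (Fin n)) : ℕ := trip fun i j l => σ j = i ∧ σ l = j
/-- The number of upper pseudo-nestings of `σ`. -/
def upsnest (σ : Equiv.Perm (Fin n)) : ℕ := trip fun i j l => σ j = j ∧ σ i = l
/-- The number of lower pseudo-nestings of `σ`. -/
def lpsnest (σ : Equiv.Perm (Fin n)) : ℕ := trip fun i j l => σ j = j ∧ σ l = i
/-- `psnest = upsnest (= lpsnest)`. -/
def psnest (σ : Equiv.Perm (Fin n)) : ℕ := upsnest σ

def ucrosscval (σ : Equiv.Perm (Fin n)) : ℕ :=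
  quad fun i j k l => σ i = k ∧ σ j = l ∧ j < σ⁻¹ j
def ucrosscdrise (σ : Equiv.Perm (Fin n)) : ℕ :=
  quad fun i j k l => σ i = k ∧ σ j = l ∧ σ⁻¹ j < j
def lcrosscpeak (σ : Equiv.Perm (Fin n)) : ℕ :=
  quad fun i j k l => σ k = i ∧ σ l = j ∧ σ⁻¹ k < k
def lcrosscdfall (σ : Equiv.Perm (Fin n)) : ℕ :=
  quad fun i j k l => σ k = i ∧ σ l = j ∧ k < σ⁻¹ k
def unestcval (σ : Equiv.Perm (Fin n)) : ℕ :=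
  quad fun i j k l => σ i = l ∧ σ j = k ∧ j < σ⁻¹ j
def unestcdrise (σ : Equiv.Perm (Fin n)) : ℕ :=
  quad fun i j k l => σ i = l ∧ σ j = k ∧ σ⁻¹ j < j
def lnestcpeak (σ : Equiv.Perm (Fin n)) : ℕ :=
  quad fun i j k l => σ l = i ∧ σ k = j ∧ σ⁻¹ k < k
def lnestcdfall (σ : Equiv.Perm (Fin n)) : ℕ :=
  quad fun i j k l => σ l = i ∧ σ k = j ∧ k < σ⁻¹ k

/-- `ucross (j, σ) = #{i<j<k<l : k = σ i, l = σ j}`. -/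
def ucrossAt (σ : Equiv.Perm (Fin n)) (j : Fin n) : ℕ :=
  Nat.card {t : Fin n × Fin n × Fin n //
    t.1 < j ∧ j < t.2.1 ∧ t.2.1 < t.2.2 ∧ σ t.1 = t.2.1 ∧ σ j = t.2.2}

/-- `unest (j, σ) = #{i<j<k<l : k = σ j, l = σ i}`. -/
def unestAt (σ : Equiv.Perm (Fin n)) (j : Fin n) : ℕ :=
  Nat.card {t : Fin n × Fin n × Fin n //
    t.1 < j ∧ j < t.2.1 ∧ t.2.1 < t.2.2 ∧ σ j = t.2.1 ∧ σ t.1 = t.2.2}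

/-- `lcross (k, σ) = #{i<j<k<l : i = σ k, j = σ l}`. -/
def lcrossAt (σ : Equiv.Perm (Fin n)) (k : Fin n) : ℕ :=
  Nat.card {t : Fin n × Fin n × Fin n //
    t.1 < t.2.1 ∧ t.2.1 < k ∧ k < t.2.2 ∧ σ k = t.1 ∧ σ t.2.2 = t.2.1}

/-- `lnest (k, σ) = #{i<j<k<l : i = σ l, j = σ k}`. -/
def lnestAt (σ : Equiv.Perm (Fin n)) (k : Fin n) : ℕ :=
  Nat.card {t : Fin n × Fin n × Fin n //
    t.1 < t.2.1 ∧ t.2.1 < k ∧ k < t.2.2 ∧ σ t.2.2 = t.1 ∧ σ k = t.2.1}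

/-! ### Set-partition statistics -/

open Classical in
/-- The set partitions of `{1, …, n}`, encoded as the collections of their blocks. -/
def setPartitions (n : ℕ) : Finset (Finset (Finset (Fin n))) :=
  Finset.univ.filter fun P =>
    (∀ B ∈ P, B.Nonempty) ∧ (∀ i : Fin n, ∃ B ∈ P, i ∈ B) ∧
      ∀ B ∈ P, ∀ C ∈ P, ∀ i : Fin n, i ∈ B → i ∈ C → B = C

/-- `(i, j)` is an edge of the graph `G_P`: `i < j` are consecutive elements of a
common block of `P`. -/
def arc (P : Finset (Finset (Fin n))) (i j : Fin n) : Prop :=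
  i < j ∧ ∃ B ∈ P, i ∈ B ∧ j ∈ B ∧ ∀ k ∈ B, ¬(i < k ∧ k < j)

instance (P : Finset (Finset (Fin n))) (i j : Fin n) : Decidable (arc P i j) :=
  inferInstanceAs
    (Decidable (i < j ∧ ∃ B ∈ P, i ∈ B ∧ j ∈ B ∧ ∀ k ∈ B, ¬(i < k ∧ k < j)))

/-- `i` is an opener: the smallest element of a block of size `≥ 2`. -/
def isOpener (P : Finset (Finset (Fin n))) (i : Fin n) : Prop :=
  ∃ B ∈ P, i ∈ B ∧ 2 ≤ B.card ∧ ∀ j ∈ B, i ≤ j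

/-- `i` is a closer: the largest element of a block of size `≥ 2`. -/
def isCloser (P : Finset (Finset (Fin n))) (i : Fin n) : Prop :=
  ∃ B ∈ P, i ∈ B ∧ 2 ≤ B.card ∧ ∀ j ∈ B, j ≤ i

/-- `i` is an insider: a non-smallest, non-largest element of a block of size `≥ 3`. -/
def isInsider (P : Finset (Finset (Fin n))) (i : Fin n) : Prop :=
  ∃ B ∈ P, i ∈ B ∧ 3 ≤ B.card ∧ (∃ j ∈ B, j < i) ∧ ∃ j ∈ B, i < j

/-- `i` is a singleton of `P`. -/
def isSingle (P : Finset (Finset (Fin n))) (i : Fin n) : Prop := {i} ∈ P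

instance (P : Finset (Finset (Fin n))) : DecidablePred (isOpener P) := fun i =>
  inferInstanceAs (Decidable (∃ B ∈ P, i ∈ B ∧ 2 ≤ B.card ∧ ∀ j ∈ B, i ≤ j))

instance (P : Finset (Finset (Fin n))) : DecidablePred (isCloser P) := fun i =>
  inferInstanceAs (Decidable (∃ B ∈ P, i ∈ B ∧ 2 ≤ B.card ∧ ∀ j ∈ B, j ≤ i))

instance (P : Finset (Finset (Fin n))) : DecidablePred (isInsider P) := fun i =>
  inferInstanceAs
    (Decidable (∃ B ∈ P, i ∈ B ∧ 3 ≤ B.card ∧ (∃ j ∈ B, j < i) ∧ ∃ j ∈ B, i < j))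

instance (P : Finset (Finset (Fin n))) : DecidablePred (isSingle P) := fun i =>
  inferInstanceAs (Decidable ({i} ∈ P))

/-- `i` is an exclusive record of the set partition `P`: `i` has a next-larger
element `l` in its block, and for every `j < i` the next-larger element of `j` in its
block (when it exists) is smaller than `l`. -/
def isERecP (P : Finset (Finset (Fin n))) (i : Fin n) : Prop :=
  ∃ l, arc P i l ∧ ∀ j, j < i → ∀ m, arc P j m → m < l

/-- The number of exclusive records of `P`. -/
def perecP (P : Finset (Finset (Fin n))) : ℕ := cnt (isERecP P)

/-- The number of singletons of `P`. -/
def singCount (P : Finset (Finset (Fin n))) : ℕ := cnt (isSingle P)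

/-- The number of blocks of `P` of size `≥ 2`. -/
def blkCount (P : Finset (Finset (Fin n))) : ℕ :=
  Nat.card {B : Finset (Fin n) // B ∈ P ∧ 2 ≤ B.card}

def erecinP (P : Finset (Finset (Fin n))) : ℕ := cnt fun i => isInsider P i ∧ isERecP P i
def erecopP (P : Finset (Finset (Fin n))) : ℕ := cnt fun i => isOpener P i ∧ isERecP P i
def nerecinP (P : Finset (Finset (Fin n))) : ℕ :=
  cnt fun i => isInsider P i ∧ ¬ isERecP P i
def nerecopP (P : Finset (Finset (Fin n))) : ℕ :=
  cnt fun i => isOpener P i ∧ ¬ isERecP P i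

/-- `cr (j, P) = #{i<j<k<l : (i,k) ∈ G_P and (j,l) ∈ G_P}`. -/
def crAt (P : Finset (Finset (Fin n))) (j : Fin n) : ℕ :=
  Nat.card {t : Fin n × Fin n × Fin n //
    t.1 < j ∧ j < t.2.1 ∧ t.2.1 < t.2.2 ∧ arc P t.1 t.2.1 ∧ arc P j t.2.2}

/-- `ne (j, P) = #{i<j<k<l : (i,l) ∈ G_P and (j,k) ∈ G_P}`. -/
def neAt (P : Finset (Finset (Fin n))) (j : Fin n) : ℕ :=
  Nat.card {t : Fin n × Fin n × Fin n //
    t.1 < j ∧ j < t.2.1 ∧ t.2.1 < t.2.2 ∧ arc P t.1 t.2.2 ∧ arc P j t.2.1}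

/-- `qne (j, P) = #{i<j<l : (i,l) ∈ G_P}`. -/
def qneAt (P : Finset (Finset (Fin n))) (j : Fin n) : ℕ :=
  Nat.card {p : Fin n × Fin n // p.1 < j ∧ j < p.2 ∧ arc P p.1 p.2}

/-- The total number of crossings of `P`. -/
def crP (P : Finset (Finset (Fin n))) : ℕ := quad fun i j k l => arc P i k ∧ arc P j l
/-- The number of crossings of `P` whose second index is an opener. -/
def cropP (P : Finset (Finset (Fin n))) : ℕ :=
  quad fun i j k l => arc P i k ∧ arc P j l ∧ isOpener P j
/-- The number of crossings of `P` whose second index is an insider. -/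
def crinP (P : Finset (Finset (Fin n))) : ℕ :=
  quad fun i j k l => arc P i k ∧ arc P j l ∧ isInsider P j
/-- The number of nestings of `P` whose second index is an opener. -/
def neopP (P : Finset (Finset (Fin n))) : ℕ :=
  quad fun i j k l => arc P i l ∧ arc P j k ∧ isOpener P j
/-- The number of nestings of `P` whose second index is an insider. -/
def neinP (P : Finset (Finset (Fin n))) : ℕ :=
  quad fun i j k l => arc P i l ∧ arc P j k ∧ isInsider P j
/-- The number of pseudo-nestings of `P`. -/
def psneP (P : Finset (Finset (Fin n))) : ℕ :=
  trip fun i j l => isSingle P j ∧ arc P i l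

/-- The smallest element of a block, as a natural number. -/
def bmin (B : Finset (Fin n)) : ℕ := sInf {m : ℕ | ∃ i ∈ B, (i : ℕ) = m}

/-- The largest element of a block, as a natural number. -/
def bmax (B : Finset (Fin n)) : ℕ := B.sup fun i => (i : ℕ)

/-- `ov (j, P) = #{(B₁,B₂) : j ∈ B₂, min B₁ < j < max B₁ < max B₂}`. -/
def ovAt (P : Finset (Finset (Fin n))) (j : Fin n) : ℕ :=
  Nat.card {p : Finset (Fin n) × Finset (Fin n) // p.1 ∈ P ∧ p.2 ∈ P ∧ j ∈ p.2 ∧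
    bmin p.1 < (j : ℕ) ∧ (j : ℕ) < bmax p.1 ∧ bmax p.1 < bmax p.2}

/-- `cov (j, P) = #{(B₁,B₂) : j ∈ B₂, min B₁ < j < max B₂ < max B₁}`. -/
def covAt (P : Finset (Finset (Fin n))) (j : Fin n) : ℕ :=
  Nat.card {p : Finset (Fin n) × Finset (Fin n) // p.1 ∈ P ∧ p.2 ∈ P ∧ j ∈ p.2 ∧
    bmin p.1 < (j : ℕ) ∧ (j : ℕ) < bmax p.2 ∧ bmax p.2 < bmax p.1}

/-- The number of overlaps of `P`: pairs of blocks with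
`min B₁ < min B₂ < max B₁ < max B₂`. -/
def ovP (P : Finset (Finset (Fin n))) : ℕ :=
  Nat.card {p : Finset (Fin n) × Finset (Fin n) // p.1 ∈ P ∧ p.2 ∈ P ∧
    bmin p.1 < bmin p.2 ∧ bmin p.2 < bmax p.1 ∧ bmax p.1 < bmax p.2}

/-- The number of coverings of `P`: pairs of blocks with
`min B₁ < min B₂ < max B₂ < max B₁`. -/
def covP (P : Finset (Finset (Fin n))) : ℕ :=
  Nat.card {p : Finset (Fin n) × Finset (Fin n) // p.1 ∈ P ∧ p.2 ∈ P ∧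
    bmin p.1 < bmin p.2 ∧ bmin p.2 < bmax p.2 ∧ bmax p.2 < bmax p.1}

/-- The number of pseudo-coverings of `P`: pairs of blocks with
`min B₁ < min B₂ = max B₂ < max B₁`. -/
def pscovP (P : Finset (Finset (Fin n))) : ℕ :=
  Nat.card {p : Finset (Fin n) × Finset (Fin n) // p.1 ∈ P ∧ p.2 ∈ P ∧
    bmin p.1 < bmin p.2 ∧ bmin p.2 = bmax p.2 ∧ bmax p.2 < bmax p.1}

/-- `ovin P = ∑_{j insider} ov (j, P)`. -/
def ovinP (P : Finset (Finset (Fin n))) : ℕ :=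
  ∑ j ∈ Finset.univ.filter (isInsider P), ovAt P j

/-- `covin P = ∑_{j insider} cov (j, P)`. -/
def covinP (P : Finset (Finset (Fin n))) : ℕ :=
  ∑ j ∈ Finset.univ.filter (isInsider P), covAt P j

/-- The intertwining number of two (disjoint nonempty) blocks `B`, `C`: the number of
pairs `(b,c) ∈ B × C` with no element of `B ∪ C` strictly between `b` and `c`. -/
def iota (B C : Finset (Fin n)) : ℕ :=
  Nat.card {p : Fin n × Fin n // p.1 ∈ B ∧ p.2 ∈ C ∧
    ∀ k ∈ B ∪ C, ¬(min p.1 p.2 < k ∧ k < max p.1 p.2)}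

/-- The intertwining number of a set partition: the sum of `iota B₁ B₂` over the
unordered pairs of distinct blocks, here enumerated by increasing minimum. -/
def iotaTotal (P : Finset (Finset (Fin n))) : ℕ :=
  ∑ B₁ ∈ P, ∑ B₂ ∈ P, if bmin B₁ < bmin B₂ then iota B₁ B₂ else 0

theorem Equiv.Perm.apply_inv_self {α : Type*} (f : Equiv.Perm α) (x : α) : f (f⁻¹ x) = x :=
  (Equiv.eq_symm_apply f).mp rfl

theorem Equiv.Perm.inv_apply_self {α : Type*} (f : Equiv.Perm α) (x : α) : f⁻¹ (f x) = x :=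
  Equiv.Perm.inv_eq_iff_eq.mpr rfl

section SZAux
open Finset
variable (σ : Equiv.Perm (Fin n))

private lemma ncard_eq {α : Type*} [Fintype α] (p : α → Prop) [DecidablePred p] :
    Nat.card {x // p x} = (univ.filter p).card := by
  rw [Nat.card_eq_fintype_card, Fintype.card_subtype]

private lemma card_pair (P : Fin n → Prop) (Q : Fin n → Fin n → Prop) [DecidablePred P]
    [∀ x, DecidablePred (Q x)] :
    (univ.filter fun p : Fin n × Fin n => P p.1 ∧ Q p.1 p.2).card
      = ∑ x ∈ univ.filter P, (univ.filter (Q x)).card := by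
  rw [Finset.card_eq_sum_card_fiberwise (f := Prod.fst) (t := univ.filter P)
    (fun p hp => by simp only [mem_filter, mem_univ, true_and, and_true, eq_self_iff_true, Equiv.Perm.apply_inv_self, Equiv.Perm.inv_apply_self, Finset.mem_coe] at hp ⊢; exact hp.1)]
  refine Finset.sum_congr rfl fun x hx => ?_
  simp only [mem_filter, mem_univ, true_and, and_true, eq_self_iff_true, Equiv.Perm.apply_inv_self, Equiv.Perm.inv_apply_self, Finset.mem_coe] at hx
  refine Finset.card_nbij' (i := Prod.snd) (j := fun y => (x, y)) ?_ ?_ ?_ ?_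
  · intro p hp; simp only [mem_filter, mem_univ, true_and, and_true, eq_self_iff_true, Equiv.Perm.apply_inv_self, Equiv.Perm.inv_apply_self, Finset.mem_coe] at hp ⊢
    obtain ⟨⟨h1, h2⟩, h3⟩ := hp; rwa [h3] at h2
  · intro y hy; simp only [mem_filter, mem_univ, true_and, and_true, eq_self_iff_true, Equiv.Perm.apply_inv_self, Equiv.Perm.inv_apply_self, Finset.mem_coe] at hy ⊢
    exact ⟨hx, hy⟩
  · intro p hp; simp only [mem_filter, mem_univ, true_and, and_true, eq_self_iff_true, Equiv.Perm.apply_inv_self, Equiv.Perm.inv_apply_self, Finset.mem_coe] at hp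
    exact Prod.ext hp.2.symm rfl
  · intro y _; rfl

/-- number of up-arcs crossing the gap just below level `x`. -/
private def Fc (x : ℕ) : ℕ :=
  (univ.filter fun e : Fin n => (e : ℕ) < x ∧ x ≤ (σ e : ℕ)).card

private lemma Fc_zero : Fc σ 0 = 0 := by simp [Fc]

private lemma Fc_top : Fc σ n = 0 := by
  rw [Fc, Finset.card_eq_zero, Finset.filter_eq_empty_iff]
  intro e _
  simp only [not_and, not_le]
  exact fun _ => (σ e).isLt

private lemma Fc_at (x : Fin n) :
    Fc σ (x : ℕ) = (univ.filter fun e : Fin n => e < x ∧ x ≤ σ e).card := by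
  unfold Fc
  refine congrArg Finset.card ?_
  ext e
  simp only [mem_filter, mem_univ, true_and, Fin.lt_def, Fin.le_def]

private lemma Fc_succ (x : Fin n) :
    Fc σ ((x : ℕ) + 1) = (univ.filter fun e : Fin n => e ≤ x ∧ x < σ e).card := by
  unfold Fc
  refine congrArg Finset.card ?_
  ext e
  simp only [mem_filter, mem_univ, true_and, Fin.lt_def, Fin.le_def]
  omega

/-- the basic "same number of up and down arcs across each gap" identity -/
private lemma gapEq (x : ℕ) :
    (univ.filter fun a : Fin n => (σ a : ℕ) ≤ x ∧ x < (a : ℕ)).card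
      = (univ.filter fun e : Fin n => (e : ℕ) ≤ x ∧ x < (σ e : ℕ)).card := by
  have h1 : (univ.filter fun i : Fin n => (σ i : ℕ) ≤ x).card
      = (univ.filter fun i : Fin n => (i : ℕ) ≤ x).card := by
    refine Finset.card_nbij' (i := fun i => σ i) (j := fun i => σ⁻¹ i) ?_ ?_ ?_ ?_ <;>
      intro i hi <;> simp only [mem_filter, mem_univ, true_and, Equiv.Perm.apply_inv_self,
        Equiv.Perm.inv_apply_self, Finset.mem_coe, Finset.coe_filter, Set.mem_setOf_eq] at * <;> assumption
  have h2 := Finset.card_filter_add_card_filter_not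
    (s := univ.filter fun i : Fin n => (σ i : ℕ) ≤ x) (p := fun i => (i : ℕ) ≤ x)
  have h3 := Finset.card_filter_add_card_filter_not
    (s := univ.filter fun i : Fin n => (i : ℕ) ≤ x) (p := fun i => (σ i : ℕ) ≤ x)
  simp only [Finset.filter_filter] at h2 h3
  have e1 : (univ.filter fun i : Fin n => (σ i : ℕ) ≤ x ∧ ¬(i : ℕ) ≤ x)
      = univ.filter fun a : Fin n => (σ a : ℕ) ≤ x ∧ x < (a : ℕ) := by
    apply Finset.filter_congr; intro i _; simp only [not_le]
  have e2 : (univ.filter fun i : Fin n => (i : ℕ) ≤ x ∧ ¬(σ i : ℕ) ≤ x)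
      = univ.filter fun e : Fin n => (e : ℕ) ≤ x ∧ x < (σ e : ℕ)  := by
    apply Finset.filter_congr; intro i _; simp only [not_le]
  have e3 : (univ.filter fun i : Fin n => (σ i : ℕ) ≤ x ∧ (i : ℕ) ≤ x)
      = univ.filter fun i : Fin n => (i : ℕ) ≤ x ∧ (σ i : ℕ) ≤ x := by
    apply Finset.filter_congr; intro i _; exact and_comm
  rw [e1] at h2; rw [e2] at h3; rw [e3] at h2
  omega

/-- the `Fin`-valued version of the gap identity, against `Fc`. -/
private lemma gapEq' (x : Fin n) :
    (univ.filter fun a : Fin n => σ a ≤ x ∧ x < a).card = Fc σ ((x : ℕ) + 1) := by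
  rw [Fc_succ]
  have e1 : (univ.filter fun a : Fin n => σ a ≤ x ∧ x < a)
      = univ.filter fun a : Fin n => (σ a : ℕ) ≤ (x : ℕ) ∧ (x : ℕ) < (a : ℕ) := by
    apply Finset.filter_congr; intro i _; simp only [Fin.le_def, Fin.lt_def]
  have e2 : (univ.filter fun e : Fin n => e ≤ x ∧ x < σ e)
      = univ.filter fun e : Fin n => (e : ℕ) ≤ (x : ℕ) ∧ (x : ℕ) < (σ e : ℕ) := by
    apply Finset.filter_congr; intro i _; simp only [Fin.le_def, Fin.lt_def]
  rw [e1, e2, gapEq]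

private lemma Fc_step (m : Fin n) :
    Fc σ ((m : ℕ) + 1) + (if σ⁻¹ m < m then 1 else 0)
      = Fc σ (m : ℕ) + (if m < σ m then 1 else 0) := by
  classical
  set B : Finset (Fin n) :=
    univ.filter (fun e => e ≤ m ∧ m ≤ σ e ∧ ¬(e = m ∧ σ e = m)) with hB
  have s1 := Finset.card_filter_add_card_filter_not (s := B) (p := fun e => σ e = m)
  have s2 := Finset.card_filter_add_card_filter_not (s := B) (p := fun e => e = m)
  have hB1 : B.filter (fun e => σ e = m) = if σ⁻¹ m < m then {σ⁻¹ m} else ∅ := by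
    ext e
    simp only [hB, mem_filter, mem_univ, true_and, and_true, eq_self_iff_true, Equiv.Perm.apply_inv_self, Equiv.Perm.inv_apply_self]
    split_ifs with h
    · simp only [mem_singleton]
      constructor
      · rintro ⟨⟨-, -, -⟩, hσ⟩
        rw [← hσ, Equiv.Perm.inv_apply_self]
      · rintro rfl
        refine ⟨⟨le_of_lt h, ?_, ?_⟩, Equiv.Perm.apply_inv_self σ m⟩
        · rw [Equiv.Perm.apply_inv_self]
        · rintro ⟨h1, -⟩
          rw [h1] at h; exact absurd h (lt_irrefl m)
    · simp only [notMem_empty, iff_false]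
      rintro ⟨⟨he, -, hne⟩, hσ⟩
      have he' : e = σ⁻¹ m := by rw [← hσ, Equiv.Perm.inv_apply_self]
      subst he'
      have heq : σ⁻¹ m = m := le_antisymm he (not_lt.mp h)
      exact hne ⟨heq, by rw [heq] at hσ; rw [heq]; exact hσ⟩
  have hB2 : B.filter (fun e => e = m) = if m < σ m then {m} else ∅ := by
    ext e
    simp only [hB, mem_filter, mem_univ, true_and, and_true, eq_self_iff_true, Equiv.Perm.apply_inv_self, Equiv.Perm.inv_apply_self]
    split_ifs with h
    · simp only [mem_singleton]
      constructor
      · rintro ⟨-, he⟩; exact he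
      · rintro rfl
        refine ⟨⟨le_refl _, le_of_lt h, fun hc => ?_⟩, rfl⟩
        rw [hc.2] at h; exact lt_irrefl _ h
    · simp only [notMem_empty, iff_false]
      rintro ⟨⟨-, hge, hne⟩, rfl⟩
      exact hne ⟨rfl, le_antisymm (not_lt.mp h) hge⟩
  have hB1' : B.filter (fun e => ¬ σ e = m) = univ.filter fun e : Fin n => e ≤ m ∧ m < σ e := by
    ext e
    simp only [hB, mem_filter, mem_univ, true_and, and_true, eq_self_iff_true, Equiv.Perm.apply_inv_self, Equiv.Perm.inv_apply_self]
    constructor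
    · rintro ⟨⟨he, hge, -⟩, hne⟩
      exact ⟨he, lt_of_le_of_ne hge (fun hh => hne hh.symm)⟩
    · rintro ⟨he, hgt⟩
      exact ⟨⟨he, le_of_lt hgt, fun hc => by rw [hc.2] at hgt; exact lt_irrefl m hgt⟩,
        fun hh => by rw [hh] at hgt; exact lt_irrefl m hgt⟩
  have hB2' : B.filter (fun e => ¬ e = m) = univ.filter fun e : Fin n => e < m ∧ m ≤ σ e := by
    ext e
    simp only [hB, mem_filter, mem_univ, true_and, and_true, eq_self_iff_true, Equiv.Perm.apply_inv_self, Equiv.Perm.inv_apply_self]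
    constructor
    · rintro ⟨⟨he, hge, -⟩, hne⟩
      exact ⟨lt_of_le_of_ne he hne, hge⟩
    · rintro ⟨he, hge⟩
      refine ⟨⟨le_of_lt he, hge, fun hc => by rw [hc.1] at he; exact lt_irrefl m he⟩,
        fun hh => by rw [hh] at he; exact lt_irrefl m he⟩
  rw [hB1, hB1'] at s1
  rw [hB2, hB2'] at s2
  rw [Fc_succ, Fc_at]
  by_cases h1 : σ⁻¹ m < m <;> by_cases h2 : m < σ m <;>
    simp only [h1, h2, if_true, if_false] at s1 s2 ⊢ <;> simp at s1 s2 <;> omega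

private lemma inv_fix {m : Fin n} (h : σ⁻¹ m = m) : σ m = m := by
  conv_lhs => rw [← h, Equiv.Perm.apply_inv_self]

private lemma fix_inv {m : Fin n} (h : σ m = m) : σ⁻¹ m = m := by
  conv_lhs => rw [← h, Equiv.Perm.inv_apply_self]

private lemma anti_of_not {m : Fin n} (h1 : ¬m < σ m) (h2 : σ⁻¹ m < m) : σ m < m :=
  lt_of_le_of_ne (not_lt.mp h1) fun hh => by rw [fix_inv σ hh] at h2; exact lt_irrefl m h2

private lemma anti_of_not' {m : Fin n} (h1 : ¬m < σ m) (h2 : m < σ⁻¹ m) : σ m < m :=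
  lt_of_le_of_ne (not_lt.mp h1) fun hh => by rw [fix_inv σ hh] at h2; exact lt_irrefl m h2

private lemma val_of_not {m : Fin n} (h1 : m < σ m) (h2 : ¬σ⁻¹ m < m) : m < σ⁻¹ m :=
  lt_of_le_of_ne (not_lt.mp h2) fun hh => by rw [inv_fix σ hh.symm] at h1; exact lt_irrefl m h1

private def Fz (x : ℕ) : ℤ := (Fc σ x : ℤ)

private lemma Fz_zero : Fz σ 0 = 0 := by rw [Fz, Fc_zero]; rfl

private lemma Fz_top : Fz σ n = 0 := by rw [Fz, Fc_top]; rfl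

private lemma Fz_sq_zero : Fz σ 0 ^ 2 = 0 := by rw [Fz_zero]; ring

private lemma Fz_sq_top : Fz σ n ^ 2 = 0 := by rw [Fz_top]; ring

private lemma Fz_step (m : Fin n) :
    Fz σ ((m : ℕ) + 1)
      = Fz σ (m : ℕ) + (if m < σ m then 1 else 0) - (if σ⁻¹ m < m then 1 else 0) := by
  have h := Fc_step σ m
  unfold Fz
  by_cases h1 : σ⁻¹ m < m <;> by_cases h2 : m < σ m <;>
    simp only [h1, h2, if_true, if_false] at h ⊢ <;> omega

private lemma telescope (g : ℕ → ℤ) (hz : g 0 = 0) (ht : g n = 0) :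
    ∑ m : Fin n, (g ((m : ℕ) + 1) - g (m : ℕ)) = 0 := by
  rw [Fin.sum_univ_eq_sum_range (fun i => g (i + 1) - g i) n, Finset.sum_range_sub g, hz, ht,
    sub_zero]

private lemma card_cval_cpeak :
    ((univ.filter fun m : Fin n => m < σ m ∧ m < σ⁻¹ m).card : ℤ)
      = (univ.filter fun m : Fin n => σ m < m ∧ σ⁻¹ m < m).card := by
  have t0 := telescope (Fz σ) (Fz_zero σ) (Fz_top σ)
  have hpt : ∀ m : Fin n, Fz σ ((m : ℕ) + 1) - Fz σ (m : ℕ)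
      = (if m < σ m ∧ m < σ⁻¹ m then (1 : ℤ) else 0)
        - (if σ m < m ∧ σ⁻¹ m < m then (1 : ℤ) else 0) := by
    intro m
    rw [Fz_step]
    by_cases h1 : m < σ m <;> by_cases h2 : σ⁻¹ m < m
    · simp [h1, h2, asymm h2, asymm h1, -Equiv.Perm.coe_inv]
    · simp [h1, h2, val_of_not σ h1 h2, asymm h1, -Equiv.Perm.coe_inv]
    · simp [h1, h2, anti_of_not σ h1 h2]
    · simp [h1, h2, -Equiv.Perm.coe_inv]
  rw [Finset.sum_congr rfl (fun m _ => hpt m), Finset.sum_sub_distrib,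
    Finset.sum_boole, Finset.sum_boole] at t0
  omega

private lemma walk :
    ∑ a ∈ univ.filter (fun a : Fin n => σ a < a), Fz σ ((σ a : ℕ))
      = ∑ a ∈ univ.filter (fun a : Fin n => σ a < a), Fz σ ((a : ℕ) + 1) := by
  classical
  have reidx : ∑ a ∈ univ.filter (fun a : Fin n => σ a < a), Fz σ ((σ a : ℕ))
      = ∑ m ∈ univ.filter (fun m : Fin n => m < σ⁻¹ m), Fz σ (m : ℕ) := by
    refine Finset.sum_nbij' (i := fun a => σ a) (j := fun m => σ⁻¹ m) ?_ ?_ ?_ ?_ ?_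
    · intro a ha; simp only [mem_filter, mem_univ, true_and, and_true, eq_self_iff_true, Equiv.Perm.apply_inv_self, Equiv.Perm.inv_apply_self, Finset.mem_coe] at ha ⊢
      exact ha
    · intro m hm; simp only [mem_filter, mem_univ, true_and, and_true, eq_self_iff_true, Equiv.Perm.apply_inv_self, Equiv.Perm.inv_apply_self, Finset.mem_coe] at hm ⊢
      exact hm
    · intro a _; exact Equiv.Perm.inv_apply_self σ a
    · intro m _; exact Equiv.Perm.apply_inv_self σ m
    · intro a _; rfl
  rw [reidx]
  have splitL := Finset.sum_filter_add_sum_filter_not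
    (univ.filter (fun m : Fin n => m < σ⁻¹ m)) (fun m => m < σ m) (fun m => Fz σ (m : ℕ))
  have splitR := Finset.sum_filter_add_sum_filter_not
    (univ.filter (fun a : Fin n => σ a < a)) (fun m => σ⁻¹ m < m) (fun m => Fz σ ((m : ℕ) + 1))
  rw [Finset.filter_filter, Finset.filter_filter] at splitL splitR
  have eL : (univ.filter fun m : Fin n => m < σ⁻¹ m ∧ m < σ m)
      = univ.filter fun m : Fin n => m < σ m ∧ m < σ⁻¹ m := by
    apply Finset.filter_congr; intro m _; exact and_comm
  have eL' : (univ.filter fun m : Fin n => m < σ⁻¹ m ∧ ¬m < σ m)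
      = univ.filter fun m : Fin n => σ m < m ∧ m < σ⁻¹ m := by
    apply Finset.filter_congr; intro m _
    constructor
    · rintro ⟨hv, hnp⟩
      exact ⟨anti_of_not' σ hnp hv, hv⟩
    · rintro ⟨hp, hv⟩; exact ⟨hv, asymm hp⟩
  have eR' : (univ.filter fun m : Fin n => σ m < m ∧ ¬σ⁻¹ m < m)
      = univ.filter fun m : Fin n => σ m < m ∧ m < σ⁻¹ m := by
    apply Finset.filter_congr; intro m _
    constructor
    · rintro ⟨hp, hnv⟩
      refine ⟨hp, lt_of_le_of_ne (not_lt.mp hnv) (fun hh => ?_)⟩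
      rw [inv_fix σ hh.symm] at hp
      exact lt_irrefl m hp
    · rintro ⟨hp, hv⟩; exact ⟨hp, asymm hv⟩
  rw [eL, eL'] at splitL
  rw [eR'] at splitR
  have hdf : ∑ m ∈ univ.filter (fun m : Fin n => σ m < m ∧ m < σ⁻¹ m), Fz σ (m : ℕ)
      = ∑ m ∈ univ.filter (fun m : Fin n => σ m < m ∧ m < σ⁻¹ m), Fz σ ((m : ℕ) + 1) := by
    refine Finset.sum_congr rfl fun m hm => ?_
    simp only [mem_filter, mem_univ, true_and, and_true, eq_self_iff_true, Equiv.Perm.apply_inv_self, Equiv.Perm.inv_apply_self, Finset.mem_coe] at hm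
    rw [Fz_step]
    simp [asymm hm.1, asymm hm.2, -Equiv.Perm.coe_inv]
  have t2 := telescope (fun x => Fz σ x ^ 2) (Fz_sq_zero σ) (Fz_sq_top σ)
  have hpt2 : ∀ m : Fin n, Fz σ ((m : ℕ) + 1) ^ 2 - Fz σ (m : ℕ) ^ 2
      = (if m < σ m ∧ m < σ⁻¹ m then 2 * Fz σ (m : ℕ) + 1 else 0)
        - (if σ m < m ∧ σ⁻¹ m < m then 2 * Fz σ (m : ℕ) - 1 else 0) := by
    intro m
    rw [Fz_step]
    by_cases h1 : m < σ m <;> by_cases h2 : σ⁻¹ m < m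
    · simp only [h1, h2, asymm h2, asymm h1, if_true, if_false, and_true, and_false, false_and,
        sub_zero, zero_sub]
      ring
    · simp only [h1, h2, val_of_not σ h1 h2, asymm h1, if_true, if_false, and_true, and_self,
        and_false, false_and, true_and, sub_zero, zero_sub]
      ring
    · simp only [h1, h2, anti_of_not σ h1 h2, if_true, if_false, false_and, and_self, and_true,
        true_and, sub_zero, zero_sub]
      ring
    · simp only [h1, h2, if_false, false_and, and_false, sub_zero, zero_sub]
      ring
  rw [Finset.sum_congr rfl (fun m _ => hpt2 m), Finset.sum_sub_distrib,
    ← Finset.sum_filter, ← Finset.sum_filter] at t2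
  have hcc := card_cval_cpeak σ
  have expandL : ∑ m ∈ univ.filter (fun m : Fin n => m < σ m ∧ m < σ⁻¹ m),
      (2 * Fz σ (m : ℕ) + 1)
      = 2 * (∑ m ∈ univ.filter (fun m : Fin n => m < σ m ∧ m < σ⁻¹ m), Fz σ (m : ℕ))
        + (univ.filter fun m : Fin n => m < σ m ∧ m < σ⁻¹ m).card := by
    rw [Finset.sum_add_distrib, Finset.sum_const, ← Finset.mul_sum]
    simp [nsmul_eq_mul]
  have expandR : ∑ m ∈ univ.filter (fun m : Fin n => σ m < m ∧ σ⁻¹ m < m),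
      (2 * Fz σ (m : ℕ) - 1)
      = 2 * (∑ m ∈ univ.filter (fun m : Fin n => σ m < m ∧ σ⁻¹ m < m), Fz σ (m : ℕ))
        - (univ.filter fun m : Fin n => σ m < m ∧ σ⁻¹ m < m).card := by
    rw [Finset.sum_sub_distrib, Finset.sum_const, ← Finset.mul_sum]
    simp [nsmul_eq_mul]
  have hpk : ∑ m ∈ univ.filter (fun m : Fin n => σ m < m ∧ σ⁻¹ m < m), Fz σ ((m : ℕ) + 1)
      = ∑ m ∈ univ.filter (fun m : Fin n => σ m < m ∧ σ⁻¹ m < m), (Fz σ (m : ℕ) - 1) := by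
    refine Finset.sum_congr rfl fun m hm => ?_
    simp only [mem_filter, mem_univ, true_and, and_true, eq_self_iff_true, Equiv.Perm.apply_inv_self, Equiv.Perm.inv_apply_self, Finset.mem_coe] at hm
    rw [Fz_step]
    simp [asymm hm.1, hm.2, -Equiv.Perm.coe_inv]
  rw [expandL, expandR] at t2
  rw [hpk, Finset.sum_sub_distrib, Finset.sum_const] at splitR
  simp only [nsmul_eq_mul, mul_one] at splitR
  linarith [splitL, splitR, t2, hcc, hdf]

end SZAux

section SZAux2
open Finset
variable (σ : Equiv.Perm (Fin n))

private def InvF : Finset (Fin n × Fin n) :=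
  univ.filter fun p => p.1 < p.2 ∧ σ p.2 < σ p.1
private def UNestP : Finset (Fin n × Fin n) :=
  univ.filter fun p => p.1 < p.2 ∧ p.2 < σ p.2 ∧ σ p.2 < σ p.1
private def LNestP : Finset (Fin n × Fin n) :=
  univ.filter fun p => σ p.1 < p.1 ∧ σ p.2 < σ p.1 ∧ p.1 < p.2
private def UPsP : Finset (Fin n × Fin n) :=
  univ.filter fun p => σ p.2 = p.2 ∧ p.1 < p.2 ∧ p.2 < σ p.1
private def LPsP : Finset (Fin n × Fin n) :=
  univ.filter fun p => σ p.1 = p.1 ∧ (p.1 < p.2 ∧ σ p.2 < p.1)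
private def MF : Finset (Fin n × Fin n) :=
  univ.filter fun p => p.1 < σ p.1 ∧ σ p.2 < p.2 ∧ p.1 < p.2 ∧ σ p.2 < σ p.1
private def UpPairF : Finset (Fin n × Fin n) :=
  univ.filter fun p => p.1 < p.2 ∧ p.2 < σ p.1 ∧ p.2 < σ p.2
private def UCrossQ : Finset (Fin n × Fin n × Fin n × Fin n) :=
  univ.filter fun q => q.1 < q.2.1 ∧ q.2.1 < q.2.2.1 ∧ q.2.2.1 < q.2.2.2 ∧
    (σ q.1 = q.2.2.1 ∧ σ q.2.1 = q.2.2.2)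
private def UNestQ : Finset (Fin n × Fin n × Fin n × Fin n) :=
  univ.filter fun q => q.1 < q.2.1 ∧ q.2.1 < q.2.2.1 ∧ q.2.2.1 < q.2.2.2 ∧
    (σ q.1 = q.2.2.2 ∧ σ q.2.1 = q.2.2.1)
private def LCrossQ : Finset (Fin n × Fin n × Fin n × Fin n) :=
  univ.filter fun q => q.1 < q.2.1 ∧ q.2.1 < q.2.2.1 ∧ q.2.2.1 < q.2.2.2 ∧
    (σ q.2.2.1 = q.1 ∧ σ q.2.2.2 = q.2.1)
private def LNestQ : Finset (Fin n × Fin n × Fin n × Fin n) :=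
  univ.filter fun q => q.1 < q.2.1 ∧ q.2.1 < q.2.2.1 ∧ q.2.2.1 < q.2.2.2 ∧
    (σ q.2.2.2 = q.1 ∧ σ q.2.2.1 = q.2.1)
private def LJoinT : Finset (Fin n × Fin n × Fin n) :=
  univ.filter fun q => q.1 < q.2.1 ∧ q.2.1 < q.2.2 ∧ (σ q.2.1 = q.1 ∧ σ q.2.2 = q.2.1)
private def UPsT : Finset (Fin n × Fin n × Fin n) :=
  univ.filter fun q => q.1 < q.2.1 ∧ q.2.1 < q.2.2 ∧ (σ q.2.1 = q.2.1 ∧ σ q.1 = q.2.2)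
private def LPsT : Finset (Fin n × Fin n × Fin n) :=
  univ.filter fun q => q.1 < q.2.1 ∧ q.2.1 < q.2.2 ∧ (σ q.2.1 = q.2.1 ∧ σ q.2.2 = q.1)

private lemma step1 : (InvF σ).card
    = (UNestP σ).card + (UPsP σ).card + (LPsP σ).card + (LNestP σ).card + (MF σ).card := by
  classical
  have h1 := Finset.card_filter_add_card_filter_not (s := InvF σ)
    (p := fun p => p.1 < σ p.1)
  have h2 := Finset.card_filter_add_card_filter_not
    (s := (InvF σ).filter fun p => p.1 < σ p.1) (p := fun p => σ p.2 < p.2)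
  have h3 := Finset.card_filter_add_card_filter_not
    (s := ((InvF σ).filter fun p => p.1 < σ p.1).filter fun p => ¬ σ p.2 < p.2)
    (p := fun p => σ p.2 = p.2)
  have h4 := Finset.card_filter_add_card_filter_not
    (s := (InvF σ).filter fun p => ¬ p.1 < σ p.1) (p := fun p => σ p.1 = p.1)
  have e1 : ((InvF σ).filter fun p => p.1 < σ p.1).filter (fun p => σ p.2 < p.2) = MF σ := by
    ext p
    simp only [InvF, MF, mem_filter, mem_univ, true_and, Fin.lt_def]
    omega
  have e2 : (((InvF σ).filter fun p => p.1 < σ p.1).filter fun p => ¬ σ p.2 < p.2).filter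
      (fun p => σ p.2 = p.2) = UPsP σ := by
    ext p
    simp only [InvF, UPsP, mem_filter, mem_univ, true_and, Fin.lt_def, Fin.ext_iff]
    omega
  have e3 : (((InvF σ).filter fun p => p.1 < σ p.1).filter fun p => ¬ σ p.2 < p.2).filter
      (fun p => ¬ σ p.2 = p.2) = UNestP σ := by
    ext p
    simp only [InvF, UNestP, mem_filter, mem_univ, true_and, Fin.lt_def, Fin.ext_iff]
    omega
  have e4 : ((InvF σ).filter fun p => ¬ p.1 < σ p.1).filter (fun p => σ p.1 = p.1)
      = LPsP σ := by
    ext p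
    simp only [InvF, LPsP, mem_filter, mem_univ, true_and, Fin.lt_def, Fin.ext_iff]
    omega
  have e5 : ((InvF σ).filter fun p => ¬ p.1 < σ p.1).filter (fun p => ¬ σ p.1 = p.1)
      = LNestP σ := by
    ext p
    simp only [InvF, LNestP, mem_filter, mem_univ, true_and, Fin.lt_def, Fin.ext_iff]
    omega
  rw [e1] at h2
  rw [e2, e3] at h3
  rw [e4, e5] at h4
  omega

private lemma unestP_card : (UNestP σ).card = (UNestQ σ).card := by
  refine Finset.card_nbij' (i := fun p => (p.1, p.2, σ p.2, σ p.1))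
    (j := fun q => (q.1, q.2.1)) ?_ ?_ ?_ ?_
  · rintro ⟨a, b⟩ hp
    simp only [UNestP, UNestQ, mem_filter, mem_univ, true_and, and_true, eq_self_iff_true, Equiv.Perm.apply_inv_self, Equiv.Perm.inv_apply_self, Finset.mem_coe] at hp ⊢
    exact ⟨hp.1, hp.2.1, hp.2.2⟩
  · rintro ⟨a, b, c, d⟩ hq
    simp only [UNestP, UNestQ, mem_filter, mem_univ, true_and, and_true, eq_self_iff_true, Equiv.Perm.apply_inv_self, Equiv.Perm.inv_apply_self, Finset.mem_coe] at hq ⊢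
    obtain ⟨h1, h2, h3, h4, h5⟩ := hq
    rw [h4, h5]
    exact ⟨h1, h2, h3⟩
  · rintro ⟨a, b⟩ _; rfl
  · rintro ⟨a, b, c, d⟩ hq
    simp only [UNestQ, mem_filter, mem_univ, true_and, and_true, eq_self_iff_true, Equiv.Perm.apply_inv_self, Equiv.Perm.inv_apply_self, Finset.mem_coe] at hq
    simp [hq.2.2.2.1, hq.2.2.2.2]

private lemma lnestP_card : (LNestP σ).card = (LNestQ σ).card := by
  refine Finset.card_nbij' (i := fun p => (σ p.2, σ p.1, p.1, p.2))
    (j := fun q => (q.2.2.1, q.2.2.2)) ?_ ?_ ?_ ?_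
  · rintro ⟨a, b⟩ hp
    simp only [LNestP, LNestQ, mem_filter, mem_univ, true_and, and_true, eq_self_iff_true, Equiv.Perm.apply_inv_self, Equiv.Perm.inv_apply_self, Finset.mem_coe] at hp ⊢
    exact ⟨hp.2.1, hp.1, hp.2.2⟩
  · rintro ⟨a, b, c, d⟩ hq
    simp only [LNestP, LNestQ, mem_filter, mem_univ, true_and, and_true, eq_self_iff_true, Equiv.Perm.apply_inv_self, Equiv.Perm.inv_apply_self, Finset.mem_coe] at hq ⊢
    obtain ⟨h1, h2, h3, h4, h5⟩ := hq
    rw [h4, h5]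
    exact ⟨h2, h1, h3⟩
  · rintro ⟨a, b⟩ _; rfl
  · rintro ⟨a, b, c, d⟩ hq
    simp only [LNestQ, mem_filter, mem_univ, true_and, and_true, eq_self_iff_true, Equiv.Perm.apply_inv_self, Equiv.Perm.inv_apply_self, Finset.mem_coe] at hq
    simp [hq.2.2.2.1, hq.2.2.2.2]

private lemma upsP_card : (UPsP σ).card = (UPsT σ).card := by
  refine Finset.card_nbij' (i := fun p => (p.1, p.2, σ p.1))
    (j := fun q => (q.1, q.2.1)) ?_ ?_ ?_ ?_
  · rintro ⟨a, b⟩ hp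
    simp only [UPsP, UPsT, mem_filter, mem_univ, true_and, and_true, eq_self_iff_true, Equiv.Perm.apply_inv_self, Equiv.Perm.inv_apply_self, Finset.mem_coe] at hp ⊢
    exact ⟨hp.2.1, hp.2.2, hp.1⟩
  · rintro ⟨a, b, c⟩ hq
    simp only [UPsP, UPsT, mem_filter, mem_univ, true_and, and_true, eq_self_iff_true, Equiv.Perm.apply_inv_self, Equiv.Perm.inv_apply_self, Finset.mem_coe] at hq ⊢
    obtain ⟨h1, h2, h3, h4⟩ := hq
    exact ⟨h3, h1, by rw [h4]; exact h2⟩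
  · rintro ⟨a, b⟩ _; rfl
  · rintro ⟨a, b, c⟩ hq
    simp only [UPsT, mem_filter, mem_univ, true_and, and_true, eq_self_iff_true, Equiv.Perm.apply_inv_self, Equiv.Perm.inv_apply_self, Finset.mem_coe] at hq
    simp [hq.2.2.2]

private lemma lpsP_card : (LPsP σ).card = (LPsT σ).card := by
  refine Finset.card_nbij' (i := fun p => (σ p.2, p.1, p.2))
    (j := fun q => (q.2.1, q.2.2)) ?_ ?_ ?_ ?_
  · rintro ⟨a, b⟩ hp
    simp only [LPsP, LPsT, mem_filter, mem_univ, true_and, and_true, eq_self_iff_true, Equiv.Perm.apply_inv_self, Equiv.Perm.inv_apply_self, Finset.mem_coe] at hp ⊢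
    exact ⟨hp.2.2, hp.2.1, hp.1⟩
  · rintro ⟨a, b, c⟩ hq
    simp only [LPsP, LPsT, mem_filter, mem_univ, true_and, and_true, eq_self_iff_true, Equiv.Perm.apply_inv_self, Equiv.Perm.inv_apply_self, Finset.mem_coe] at hq ⊢
    obtain ⟨h1, h2, h3, h4⟩ := hq
    exact ⟨h3, h2, by rw [h4]; exact h1⟩
  · rintro ⟨a, b⟩ _; rfl
  · rintro ⟨a, b, c⟩ hq
    simp only [LPsT, mem_filter, mem_univ, true_and, and_true, eq_self_iff_true, Equiv.Perm.apply_inv_self, Equiv.Perm.inv_apply_self, Finset.mem_coe] at hq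
    simp [hq.2.2.2]

private lemma ljoinT_card :
    (LJoinT σ).card = (univ.filter fun j : Fin n => σ j < j ∧ j < σ⁻¹ j).card := by
  refine Finset.card_nbij' (i := fun q => q.2.1) (j := fun m => (σ m, m, σ⁻¹ m)) ?_ ?_ ?_ ?_
  · rintro ⟨a, b, c⟩ hq
    simp only [LJoinT, mem_filter, mem_univ, true_and, and_true, eq_self_iff_true, Equiv.Perm.apply_inv_self, Equiv.Perm.inv_apply_self, Finset.mem_coe] at hq ⊢
    obtain ⟨h1, h2, h3, h4⟩ := hq
    constructor
    · rw [h3]; exact h1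
    · have : σ⁻¹ b = c := by rw [← h4, Equiv.Perm.inv_apply_self]
      rw [this]; exact h2
  · intro m hm
    simp only [LJoinT, mem_filter, mem_univ, true_and, and_true, eq_self_iff_true, Equiv.Perm.apply_inv_self, Equiv.Perm.inv_apply_self, Finset.mem_coe] at hm ⊢
    exact hm
  · rintro ⟨a, b, c⟩ hq
    simp only [LJoinT, mem_filter, mem_univ, true_and, and_true, eq_self_iff_true, Equiv.Perm.apply_inv_self, Equiv.Perm.inv_apply_self, Finset.mem_coe] at hq
    obtain ⟨-, -, h3, h4⟩ := hq
    have hc : σ⁻¹ b = c := by rw [← h4, Equiv.Perm.inv_apply_self]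
    simp [h3, hc]
  · intro m _; rfl

end SZAux2

section SZAux3
open Finset
variable (σ : Equiv.Perm (Fin n))

private lemma stepM : (MF σ).card
    = (∑ e ∈ univ.filter (fun e : Fin n => e < σ e), Fc σ ((e : ℕ) + 1))
      + ∑ a ∈ univ.filter (fun a : Fin n => σ a < a), Fc σ ((σ a : ℕ)) := by
  classical
  have hsplit := Finset.card_filter_add_card_filter_not (s := MF σ)
    (p := fun p => σ p.2 ≤ p.1)
  have eX : (MF σ).filter (fun p => σ p.2 ≤ p.1)
      = univ.filter fun p : Fin n × Fin n => p.1 < σ p.1 ∧ (σ p.2 ≤ p.1 ∧ p.1 < p.2) := by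
    ext p
    simp only [MF, mem_filter, mem_univ, true_and, Fin.lt_def, Fin.le_def]
    omega
  have hX : ((MF σ).filter (fun p => σ p.2 ≤ p.1)).card
      = ∑ e ∈ univ.filter (fun e : Fin n => e < σ e), Fc σ ((e : ℕ) + 1) := by
    rw [eX]
    refine Eq.trans (card_pair (fun x : Fin n => x < σ x) fun x a => σ a ≤ x ∧ x < a) ?_
    exact Finset.sum_congr rfl fun x _ => gapEq' σ x
  have eY : ((MF σ).filter (fun p => ¬ σ p.2 ≤ p.1)).card
      = (univ.filter fun p : Fin n × Fin n =>
          σ p.1 < p.1 ∧ (p.2 < σ p.1 ∧ σ p.1 ≤ σ p.2)).card := by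
    refine Finset.card_nbij' (i := fun p => (p.2, p.1)) (j := fun p => (p.2, p.1)) ?_ ?_ ?_ ?_
    · rintro ⟨a, b⟩ hp
      simp only [MF, mem_filter, mem_univ, true_and, and_true, eq_self_iff_true, Equiv.Perm.apply_inv_self, Equiv.Perm.inv_apply_self, Finset.mem_coe] at hp ⊢
      obtain ⟨⟨-, h2, -, h4⟩, h5⟩ := hp
      exact ⟨h2, not_le.mp h5, le_of_lt h4⟩
    · rintro ⟨a, b⟩ hp
      simp only [MF, mem_filter, mem_univ, true_and, and_true, eq_self_iff_true, Equiv.Perm.apply_inv_self, Equiv.Perm.inv_apply_self, Finset.mem_coe] at hp ⊢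
      obtain ⟨h1, h2, h3⟩ := hp
      have hne : b ≠ a := ne_of_lt (lt_trans h2 h1)
      have h4 : σ a < σ b := lt_of_le_of_ne h3 (fun hh => hne (σ.injective hh.symm))
      exact ⟨⟨lt_of_lt_of_le h2 h3, h1, lt_trans h2 h1, h4⟩, not_le.mpr h2⟩
    · rintro ⟨a, b⟩ _; rfl
    · rintro ⟨a, b⟩ _; rfl
  have hY : ((MF σ).filter (fun p => ¬ σ p.2 ≤ p.1)).card
      = ∑ a ∈ univ.filter (fun a : Fin n => σ a < a), Fc σ ((σ a : ℕ)) := by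
    rw [eY]
    refine Eq.trans (card_pair (fun a : Fin n => σ a < a) fun a e => e < σ a ∧ σ a ≤ σ e) ?_
    refine Finset.sum_congr rfl fun a _ => ?_
    unfold Fc
    refine (congrArg Finset.card ?_).symm
    apply Finset.filter_congr; intro e _
    simp only [Fin.lt_def, Fin.le_def]
  omega

private lemma upSide :
    ∑ e ∈ univ.filter (fun e : Fin n => e < σ e), Fc σ ((e : ℕ) + 1)
      = (univ.filter fun i : Fin n => i < σ i).card + (UpPairF σ).card := by
  classical
  have hXU : (univ.filter fun p : Fin n × Fin n =>
      p.1 < σ p.1 ∧ (p.2 ≤ p.1 ∧ p.1 < σ p.2)).card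
      = ∑ e ∈ univ.filter (fun e : Fin n => e < σ e), Fc σ ((e : ℕ) + 1) := by
    refine Eq.trans (card_pair (fun x : Fin n => x < σ x) fun x y => y ≤ x ∧ x < σ y) ?_
    exact Finset.sum_congr rfl fun x _ => (Fc_succ σ x).symm
  set XU := univ.filter fun p : Fin n × Fin n => p.1 < σ p.1 ∧ (p.2 ≤ p.1 ∧ p.1 < σ p.2)
    with hXUdef
  have hsplit := Finset.card_filter_add_card_filter_not (s := XU)
    (p := fun p => p.2 = p.1)
  have hdiag : (XU.filter fun p => p.2 = p.1).card
      = (univ.filter fun i : Fin n => i < σ i).card := by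
    refine Finset.card_nbij' (i := fun p => p.1) (j := fun e => (e, e)) ?_ ?_ ?_ ?_
    · rintro ⟨a, b⟩ hp
      simp only [hXUdef, mem_filter, mem_univ, true_and, and_true, eq_self_iff_true, Equiv.Perm.apply_inv_self, Equiv.Perm.inv_apply_self, Finset.mem_coe] at hp ⊢
      exact hp.1.1
    · intro e he
      simp only [hXUdef, mem_filter, mem_univ, true_and, and_true, eq_self_iff_true, Equiv.Perm.apply_inv_self, Equiv.Perm.inv_apply_self, Finset.mem_coe] at he ⊢
      exact ⟨he, le_refl _, he⟩
    · rintro ⟨a, b⟩ hp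
      simp only [hXUdef, mem_filter, mem_univ, true_and, and_true, eq_self_iff_true, Equiv.Perm.apply_inv_self, Equiv.Perm.inv_apply_self, Finset.mem_coe] at hp
      exact Prod.ext rfl hp.2.symm
    · intro e _; rfl
  have hoff : (XU.filter fun p => ¬ p.2 = p.1).card = (UpPairF σ).card := by
    refine Finset.card_nbij' (i := fun p => (p.2, p.1)) (j := fun p => (p.2, p.1)) ?_ ?_ ?_ ?_
    · rintro ⟨a, b⟩ hp
      simp only [hXUdef, UpPairF, mem_filter, mem_univ, true_and, and_true, eq_self_iff_true, Equiv.Perm.apply_inv_self, Equiv.Perm.inv_apply_self, Finset.mem_coe] at hp ⊢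
      obtain ⟨⟨h1, h2, h3⟩, h4⟩ := hp
      exact ⟨lt_of_le_of_ne h2 h4, h3, h1⟩
    · rintro ⟨a, b⟩ hp
      simp only [hXUdef, UpPairF, mem_filter, mem_univ, true_and, and_true, eq_self_iff_true, Equiv.Perm.apply_inv_self, Equiv.Perm.inv_apply_self, Finset.mem_coe] at hp ⊢
      obtain ⟨h1, h2, h3⟩ := hp
      exact ⟨⟨h3, le_of_lt h1, h2⟩, ne_of_lt h1⟩
    · rintro ⟨a, b⟩ _; rfl
    · rintro ⟨a, b⟩ _; rfl
  omega

private lemma upPair_card : (UpPairF σ).card = (UNestQ σ).card + (UCrossQ σ).card := by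
  classical
  have hsplit := Finset.card_filter_add_card_filter_not (s := UpPairF σ)
    (p := fun p => σ p.2 < σ p.1)
  have h1 : ((UpPairF σ).filter fun p => σ p.2 < σ p.1).card = (UNestQ σ).card := by
    refine Finset.card_nbij' (i := fun p => (p.1, p.2, σ p.2, σ p.1))
      (j := fun q => (q.1, q.2.1)) ?_ ?_ ?_ ?_
    · rintro ⟨a, b⟩ hp
      simp only [UpPairF, UNestQ, mem_filter, mem_univ, true_and, and_true, eq_self_iff_true, Equiv.Perm.apply_inv_self, Equiv.Perm.inv_apply_self, Finset.mem_coe] at hp ⊢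
      exact ⟨hp.1.1, hp.1.2.2, hp.2⟩
    · rintro ⟨a, b, c, d⟩ hq
      simp only [UpPairF, UNestQ, mem_filter, mem_univ, true_and, and_true, eq_self_iff_true, Equiv.Perm.apply_inv_self, Equiv.Perm.inv_apply_self, Finset.mem_coe] at hq ⊢
      obtain ⟨h1, h2, h3, h4, h5⟩ := hq
      rw [h4, h5]
      exact ⟨⟨h1, lt_trans h2 h3, h2⟩, h3⟩
    · rintro ⟨a, b⟩ _; rfl
    · rintro ⟨a, b, c, d⟩ hq
      simp only [UNestQ, mem_filter, mem_univ, true_and, and_true, eq_self_iff_true, Equiv.Perm.apply_inv_self, Equiv.Perm.inv_apply_self, Finset.mem_coe] at hq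
      simp [hq.2.2.2.1, hq.2.2.2.2]
  have h2 : ((UpPairF σ).filter fun p => ¬ σ p.2 < σ p.1).card = (UCrossQ σ).card := by
    refine Finset.card_nbij' (i := fun p => (p.1, p.2, σ p.1, σ p.2))
      (j := fun q => (q.1, q.2.1)) ?_ ?_ ?_ ?_
    · rintro ⟨a, b⟩ hp
      simp only [UpPairF, UCrossQ, mem_filter, mem_univ, true_and, and_true, eq_self_iff_true, Equiv.Perm.apply_inv_self, Equiv.Perm.inv_apply_self, Finset.mem_coe] at hp ⊢
      obtain ⟨⟨h1, h2, h3⟩, h4⟩ := hp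
      have h5 : σ a < σ b :=
        lt_of_le_of_ne (not_lt.mp h4) (fun hh => (ne_of_lt h1) (σ.injective hh))
      exact ⟨h1, h2, h5⟩
    · rintro ⟨a, b, c, d⟩ hq
      simp only [UpPairF, UCrossQ, mem_filter, mem_univ, true_and, and_true, eq_self_iff_true, Equiv.Perm.apply_inv_self, Equiv.Perm.inv_apply_self, Finset.mem_coe] at hq ⊢
      obtain ⟨h1, h2, h3, h4, h5⟩ := hq
      rw [h4, h5]
      exact ⟨⟨h1, h2, lt_trans h2 h3⟩, asymm h3⟩
    · rintro ⟨a, b⟩ _; rfl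
    · rintro ⟨a, b, c, d⟩ hq
      simp only [UCrossQ, mem_filter, mem_univ, true_and, and_true, eq_self_iff_true, Equiv.Perm.apply_inv_self, Equiv.Perm.inv_apply_self, Finset.mem_coe] at hq
      simp [hq.2.2.2.1, hq.2.2.2.2]
  omega

private lemma downSide :
    ∑ a ∈ univ.filter (fun a : Fin n => σ a < a), Fc σ ((a : ℕ) + 1)
      = (LJoinT σ).card + (LCrossQ σ).card + (LNestQ σ).card := by
  classical
  have hDF : (univ.filter fun p : Fin n × Fin n =>
      σ p.1 < p.1 ∧ (σ p.2 ≤ p.1 ∧ p.1 < p.2)).card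
      = ∑ a ∈ univ.filter (fun a : Fin n => σ a < a), Fc σ ((a : ℕ) + 1) := by
    refine Eq.trans (card_pair (fun x : Fin n => σ x < x) fun x b => σ b ≤ x ∧ x < b) ?_
    exact Finset.sum_congr rfl fun x _ => gapEq' σ x
  set DF := univ.filter fun p : Fin n × Fin n => σ p.1 < p.1 ∧ (σ p.2 ≤ p.1 ∧ p.1 < p.2)
    with hDFdef
  have hsplit := Finset.card_filter_add_card_filter_not (s := DF)
    (p := fun p => σ p.2 = p.1)
  have hsplit2 := Finset.card_filter_add_card_filter_not
    (s := DF.filter fun p => ¬ σ p.2 = p.1) (p := fun p => σ p.1 < σ p.2)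
  have hjoin : (DF.filter fun p => σ p.2 = p.1).card = (LJoinT σ).card := by
    refine Finset.card_nbij' (i := fun p => (σ p.1, p.1, p.2))
      (j := fun q => (q.2.1, q.2.2)) ?_ ?_ ?_ ?_
    · rintro ⟨a, b⟩ hp
      simp only [hDFdef, LJoinT, mem_filter, mem_univ, true_and, and_true, eq_self_iff_true, Equiv.Perm.apply_inv_self, Equiv.Perm.inv_apply_self, Finset.mem_coe] at hp ⊢
      exact ⟨hp.1.1, hp.1.2.2, hp.2⟩
    · rintro ⟨a, b, c⟩ hq
      simp only [hDFdef, LJoinT, mem_filter, mem_univ, true_and, and_true, eq_self_iff_true, Equiv.Perm.apply_inv_self, Equiv.Perm.inv_apply_self, Finset.mem_coe] at hq ⊢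
      obtain ⟨h1, h2, h3, h4⟩ := hq
      exact ⟨⟨by rw [h3]; exact h1, le_of_eq h4, h2⟩, h4⟩
    · rintro ⟨a, b⟩ _; rfl
    · rintro ⟨a, b, c⟩ hq
      simp only [LJoinT, mem_filter, mem_univ, true_and, and_true, eq_self_iff_true, Equiv.Perm.apply_inv_self, Equiv.Perm.inv_apply_self, Finset.mem_coe] at hq
      simp [hq.2.2.1]
  have hcross : ((DF.filter fun p => ¬ σ p.2 = p.1).filter fun p => σ p.1 < σ p.2).card
      = (LCrossQ σ).card := by
    refine Finset.card_nbij' (i := fun p => (σ p.1, σ p.2, p.1, p.2))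
      (j := fun q => (q.2.2.1, q.2.2.2)) ?_ ?_ ?_ ?_
    · rintro ⟨a, b⟩ hp
      simp only [hDFdef, LCrossQ, mem_filter, mem_univ, true_and, and_true, eq_self_iff_true, Equiv.Perm.apply_inv_self, Equiv.Perm.inv_apply_self, Finset.mem_coe] at hp ⊢
      obtain ⟨⟨⟨h1, h2, h3⟩, h4⟩, h5⟩ := hp
      exact ⟨h5, lt_of_le_of_ne h2 h4, h3⟩
    · rintro ⟨a, b, c, d⟩ hq
      simp only [hDFdef, LCrossQ, mem_filter, mem_univ, true_and, and_true, eq_self_iff_true, Equiv.Perm.apply_inv_self, Equiv.Perm.inv_apply_self, Finset.mem_coe] at hq ⊢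
      obtain ⟨h1, h2, h3, h4, h5⟩ := hq
      rw [h4, h5]
      exact ⟨⟨⟨lt_trans h1 h2, le_of_lt h2, h3⟩, ne_of_lt h2⟩, h1⟩
    · rintro ⟨a, b⟩ _; rfl
    · rintro ⟨a, b, c, d⟩ hq
      simp only [LCrossQ, mem_filter, mem_univ, true_and, and_true, eq_self_iff_true, Equiv.Perm.apply_inv_self, Equiv.Perm.inv_apply_self, Finset.mem_coe] at hq
      simp [hq.2.2.2.1, hq.2.2.2.2]
  have hnest : ((DF.filter fun p => ¬ σ p.2 = p.1).filter fun p => ¬ σ p.1 < σ p.2).card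
      = (LNestQ σ).card := by
    refine Finset.card_nbij' (i := fun p => (σ p.2, σ p.1, p.1, p.2))
      (j := fun q => (q.2.2.1, q.2.2.2)) ?_ ?_ ?_ ?_
    · rintro ⟨a, b⟩ hp
      simp only [hDFdef, LNestQ, mem_filter, mem_univ, true_and, and_true, eq_self_iff_true, Equiv.Perm.apply_inv_self, Equiv.Perm.inv_apply_self, Finset.mem_coe] at hp ⊢
      obtain ⟨⟨⟨h1, h2, h3⟩, h4⟩, h5⟩ := hp
      have hne : a ≠ b := ne_of_lt h3
      have h6 : σ b < σ a :=
        lt_of_le_of_ne (not_lt.mp h5) (fun hh => hne (σ.injective hh).symm)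
      exact ⟨h6, h1, h3⟩
    · rintro ⟨a, b, c, d⟩ hq
      simp only [hDFdef, LNestQ, mem_filter, mem_univ, true_and, and_true, eq_self_iff_true, Equiv.Perm.apply_inv_self, Equiv.Perm.inv_apply_self, Finset.mem_coe] at hq ⊢
      obtain ⟨h1, h2, h3, h4, h5⟩ := hq
      rw [h4, h5]
      exact ⟨⟨⟨h2, le_of_lt (lt_trans h1 h2), h3⟩, ne_of_lt (lt_trans h1 h2)⟩, asymm h1⟩
    · rintro ⟨a, b⟩ _; rfl
    · rintro ⟨a, b, c, d⟩ hq
      simp only [LNestQ, mem_filter, mem_univ, true_and, and_true, eq_self_iff_true, Equiv.Perm.apply_inv_self, Equiv.Perm.inv_apply_self, Finset.mem_coe] at hq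
      simp [hq.2.2.2.1, hq.2.2.2.2]
  omega

private lemma psnest_card : (UPsP σ).card = (LPsP σ).card := by
  classical
  have hswap : (UPsP σ).card = (univ.filter fun p : Fin n × Fin n =>
      σ p.1 = p.1 ∧ (p.2 < p.1 ∧ p.1 < σ p.2)).card := by
    refine Finset.card_nbij' (i := fun p => (p.2, p.1)) (j := fun p => (p.2, p.1)) ?_ ?_ ?_ ?_
    · rintro ⟨a, b⟩ hp
      simp only [UPsP, mem_filter, mem_univ, true_and, and_true, eq_self_iff_true, Equiv.Perm.apply_inv_self, Equiv.Perm.inv_apply_self, Finset.mem_coe] at hp ⊢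
      exact ⟨hp.1, hp.2.1, hp.2.2⟩
    · rintro ⟨a, b⟩ hp
      simp only [UPsP, mem_filter, mem_univ, true_and, and_true, eq_self_iff_true, Equiv.Perm.apply_inv_self, Equiv.Perm.inv_apply_self, Finset.mem_coe] at hp ⊢
      exact ⟨hp.1, hp.2.1, hp.2.2⟩
    · rintro ⟨a, b⟩ _; rfl
    · rintro ⟨a, b⟩ _; rfl
  have hLPs : (LPsP σ).card = (univ.filter fun p : Fin n × Fin n =>
      σ p.1 = p.1 ∧ (p.1 < p.2 ∧ σ p.2 < p.1)).card := by
    refine congrArg Finset.card ?_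
    ext p
    simp only [LPsP, mem_filter, mem_univ, true_and, and_true, eq_self_iff_true, Equiv.Perm.apply_inv_self, Equiv.Perm.inv_apply_self]
  rw [hswap, hLPs]
  refine Eq.trans (card_pair (fun j : Fin n => σ j = j) fun j x => x < j ∧ j < σ x) ?_
  refine Eq.trans ?_ (card_pair (fun j : Fin n => σ j = j) fun j l => j < l ∧ σ l < j).symm
  refine Finset.sum_congr rfl fun j hj => ?_
  simp only [mem_filter, mem_univ, true_and, and_true, eq_self_iff_true, Equiv.Perm.apply_inv_self, Equiv.Perm.inv_apply_self, Finset.mem_coe] at hj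
  have eA : (univ.filter fun x : Fin n => x < j ∧ j < σ x)
      = univ.filter fun x : Fin n => x ≤ j ∧ j < σ x := by
    ext x
    simp only [mem_filter, mem_univ, true_and, and_true, eq_self_iff_true, Equiv.Perm.apply_inv_self, Equiv.Perm.inv_apply_self]
    constructor
    · rintro ⟨h1, h2⟩; exact ⟨le_of_lt h1, h2⟩
    · rintro ⟨h1, h2⟩
      refine ⟨lt_of_le_of_ne h1 (fun hh => ?_), h2⟩
      rw [hh, hj] at h2
      exact lt_irrefl j h2
  have eB : (univ.filter fun l : Fin n => j < l ∧ σ l < j)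
      = univ.filter fun l : Fin n => σ l ≤ j ∧ j < l := by
    ext l
    simp only [mem_filter, mem_univ, true_and, and_true, eq_self_iff_true, Equiv.Perm.apply_inv_self, Equiv.Perm.inv_apply_self]
    constructor
    · rintro ⟨h1, h2⟩; exact ⟨le_of_lt h2, h1⟩
    · rintro ⟨h1, h2⟩
      refine ⟨h2, lt_of_le_of_ne h1 (fun hh => ?_)⟩
      have : l = j := σ.injective (by rw [hh, hj])
      rw [this] at h2
      exact lt_irrefl j h2
  rw [eA, eB, gapEq' σ j, Fc_succ σ j]

private lemma exc_split : (univ.filter fun i : Fin n => i < σ i).card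
    = (univ.filter fun i : Fin n => i < σ i ∧ i < σ⁻¹ i).card
      + (univ.filter fun i : Fin n => σ⁻¹ i < i ∧ i < σ i).card := by
  classical
  have hsplit := Finset.card_filter_add_card_filter_not
    (s := univ.filter fun i : Fin n => i < σ i) (p := fun i => σ⁻¹ i < i)
  rw [Finset.filter_filter, Finset.filter_filter] at hsplit
  have e1 : (univ.filter fun i : Fin n => i < σ i ∧ σ⁻¹ i < i)
      = univ.filter fun i : Fin n => σ⁻¹ i < i ∧ i < σ i := by
    apply Finset.filter_congr; intro i _; exact and_comm
  have e2 : (univ.filter fun i : Fin n => i < σ i ∧ ¬σ⁻¹ i < i)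
      = univ.filter fun i : Fin n => i < σ i ∧ i < σ⁻¹ i := by
    apply Finset.filter_congr; intro i _
    constructor
    · rintro ⟨h1, h2⟩; exact ⟨h1, val_of_not σ h1 h2⟩
    · rintro ⟨h1, h2⟩; exact ⟨h1, asymm h2⟩
  rw [e1, e2] at hsplit
  omega

private lemma walkN :
    ∑ a ∈ univ.filter (fun a : Fin n => σ a < a), Fc σ ((σ a : ℕ))
      = ∑ a ∈ univ.filter (fun a : Fin n => σ a < a), Fc σ ((a : ℕ) + 1) := by
  have h := walk σ
  unfold Fz at h
  exact_mod_cast h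

end SZAux3

end

open Classical in
/-- Proposition 2.23 of Sokal–Zeng: the inversion number in
terms of cycle, crossing and nesting statistics. -/
theorem statement11 (n : ℕ) (σ : Equiv.Perm (Fin n)) :
    inversions σ =
        exc σ + (ucross σ + 2 * unest σ) +
          (lcross σ + ljoin σ + 2 * lnest σ + 2 * lpsnest σ) ∧
      inversions σ =
        cnt (isCval σ) + cnt (isCdrise σ) + cnt (isCdfall σ) + ucross σ + lcross σ +
          2 * (unest σ + lnest σ + psnest σ) := by
  classical
  have hinv : inversions σ = (InvF σ).card := by
    unfold inversions InvF; exact ncard_eq _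
  have hexc : exc σ = (Finset.univ.filter fun i : Fin n => i < σ i).card := by
    unfold exc cnt; exact ncard_eq _
  have hucross : ucross σ = (UCrossQ σ).card := by
    unfold ucross quad UCrossQ; exact ncard_eq _
  have hunest : unest σ = (UNestQ σ).card := by
    unfold unest quad UNestQ; exact ncard_eq _
  have hlcross : lcross σ = (LCrossQ σ).card := by
    unfold lcross quad LCrossQ; exact ncard_eq _
  have hlnest : lnest σ = (LNestQ σ).card := by
    unfold lnest quad LNestQ; exact ncard_eq _
  have hljoin : ljoin σ = (LJoinT σ).card := by
    unfold ljoin trip LJoinT; exact ncard_eq _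
  have hups : upsnest σ = (UPsT σ).card := by
    unfold upsnest trip UPsT; exact ncard_eq _
  have hlps : lpsnest σ = (LPsT σ).card := by
    unfold lpsnest trip LPsT; exact ncard_eq _
  have hcval : cnt (isCval σ) = (Finset.univ.filter fun i : Fin n => i < σ i ∧ i < σ⁻¹ i).card := by
    unfold cnt isCval; exact ncard_eq _
  have hcdrise : cnt (isCdrise σ)
      = (Finset.univ.filter fun i : Fin n => σ⁻¹ i < i ∧ i < σ i).card := by
    unfold cnt isCdrise; exact ncard_eq _
  have hcdfall : cnt (isCdfall σ)
      = (Finset.univ.filter fun j : Fin n => σ j < j ∧ j < σ⁻¹ j).card := by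
    unfold cnt isCdfall; exact ncard_eq _
  have hpsn : psnest σ = upsnest σ := rfl
  have k1 := step1 σ
  have k2 := unestP_card σ
  have k3 := lnestP_card σ
  have k4 := upsP_card σ
  have k5 := lpsP_card σ
  have k6 := stepM σ
  have k7 := upSide σ
  have k8 := upPair_card σ
  have k9 := downSide σ
  have k10 := walkN σ
  have k11 := psnest_card σ
  have k12 := ljoinT_card σ
  have k13 := exc_split σ
  constructor <;> omega


end Paper
end

section
/- For every permutation σ of [n]: #{(i,j) : i ≤ j < σ(i) and σ(j) > j} = #{(i,j) : σ(i) < σ(j) ≤ i and σ(j) > j}, and #{(i,j) : i ≤ j < σ(i) and σ(j) ≤ j} = #{(i,j) : σ(i) < σ(j) ≤ i and σ(j) ≤ j}. -/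
namespace Paper

/-- Double sum of indicators over ordered pairs. -/
private def dsum (n : ℕ) (c : Fin n → Fin n → Prop) [∀ i j, Decidable (c i j)] : ℕ :=
  ∑ i : Fin n, ∑ j : Fin n, if c i j then 1 else 0

private lemma sum_sum_add {n : ℕ} (u v : Fin n → Fin n → ℕ) :
    ((∑ i : Fin n, ∑ j : Fin n, u i j) + ∑ i : Fin n, ∑ j : Fin n, v i j)
      = ∑ i : Fin n, ∑ j : Fin n, (u i j + v i j) := by
  rw [← Finset.sum_add_distrib]
  exact Finset.sum_congr rfl fun i _ => Finset.sum_add_distrib.symm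

private lemma dsum_congr {n : ℕ} {c d : Fin n → Fin n → Prop}
    [∀ i j, Decidable (c i j)] [∀ i j, Decidable (d i j)]
    (h : ∀ i j, c i j ↔ d i j) : dsum n c = dsum n d := by
  unfold dsum
  exact Finset.sum_congr rfl fun i _ => Finset.sum_congr rfl fun j _ =>
    if_congr (h i j) rfl rfl

/-- Level-crossing lemma: for any threshold `t`,
`#{i : i ≤ t < σ i} = #{i : σ i ≤ t < i}`. -/
private lemma aux_level (n t : ℕ) (σ : Equiv.Perm (Fin n)) :
    (∑ i : Fin n, if (i : ℕ) ≤ t ∧ t < ((σ i : Fin n) : ℕ) then (1:ℕ) else 0) =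
      ∑ i : Fin n, if ((σ i : Fin n) : ℕ) ≤ t ∧ t < (i : ℕ) then (1:ℕ) else 0 := by
  have e1 : ((∑ i : Fin n, if (i : ℕ) ≤ t ∧ t < ((σ i : Fin n) : ℕ) then (1:ℕ) else 0)
      + ∑ i : Fin n, if (i : ℕ) ≤ t ∧ ((σ i : Fin n) : ℕ) ≤ t then (1:ℕ) else 0)
      = ∑ i : Fin n, if (i : ℕ) ≤ t then (1:ℕ) else 0 := by
    rw [← Finset.sum_add_distrib]
    exact Finset.sum_congr rfl fun i _ => by split_ifs <;> omega
  have e2 : ((∑ i : Fin n, if ((σ i : Fin n) : ℕ) ≤ t ∧ t < (i : ℕ) then (1:ℕ) else 0)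
      + ∑ i : Fin n, if (i : ℕ) ≤ t ∧ ((σ i : Fin n) : ℕ) ≤ t then (1:ℕ) else 0)
      = ∑ i : Fin n, if ((σ i : Fin n) : ℕ) ≤ t then (1:ℕ) else 0 := by
    rw [← Finset.sum_add_distrib]
    exact Finset.sum_congr rfl fun i _ => by split_ifs <;> omega
  have e3 : (∑ i : Fin n, if ((σ i : Fin n) : ℕ) ≤ t then (1:ℕ) else 0)
      = ∑ i : Fin n, if (i : ℕ) ≤ t then (1:ℕ) else 0 :=
    Equiv.sum_comp σ (fun i : Fin n => if (i : ℕ) ≤ t then (1:ℕ) else 0)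
  omega

/-- Per-value transformation: `#{i : σ i < m ≤ i} = #{i : i < m ≤ σ i}`. -/
private lemma aux_perj (n : ℕ) (σ : Equiv.Perm (Fin n)) (m : ℕ) :
    (∑ i : Fin n, if ((σ i : Fin n) : ℕ) < m ∧ m ≤ (i : ℕ) then (1:ℕ) else 0) =
      ∑ i : Fin n, if (i : ℕ) < m ∧ m ≤ ((σ i : Fin n) : ℕ) then (1:ℕ) else 0 := by
  rcases Nat.eq_zero_or_pos m with h | h
  · subst h; simp
  · have key := aux_level n (m - 1) σ
    have l : ∀ i : Fin n, (if (i : ℕ) ≤ m - 1 ∧ m - 1 < ((σ i : Fin n) : ℕ) then (1:ℕ) else 0)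
        = if (i : ℕ) < m ∧ m ≤ ((σ i : Fin n) : ℕ) then 1 else 0 := fun i =>
      if_congr (by omega) rfl rfl
    have r : ∀ i : Fin n, (if ((σ i : Fin n) : ℕ) ≤ m - 1 ∧ m - 1 < (i : ℕ) then (1:ℕ) else 0)
        = if ((σ i : Fin n) : ℕ) < m ∧ m ≤ (i : ℕ) then 1 else 0 := fun i =>
      if_congr (by omega) rfl rfl
    calc (∑ i : Fin n, if ((σ i : Fin n) : ℕ) < m ∧ m ≤ (i : ℕ) then (1:ℕ) else 0)
        = ∑ i : Fin n, if ((σ i : Fin n) : ℕ) ≤ m - 1 ∧ m - 1 < (i : ℕ) then (1:ℕ) else 0 :=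
          Finset.sum_congr rfl fun i _ => (r i).symm
      _ = ∑ i : Fin n, if (i : ℕ) ≤ m - 1 ∧ m - 1 < ((σ i : Fin n) : ℕ) then (1:ℕ) else 0 :=
          key.symm
      _ = ∑ i : Fin n, if (i : ℕ) < m ∧ m ≤ ((σ i : Fin n) : ℕ) then (1:ℕ) else 0 :=
          Finset.sum_congr rfl fun i _ => l i

/-- Interval shift: `#{j : a ≤ j < b} = #{j : a < j ≤ b}` for `b < n`. -/
private lemma aux_ico (n a b : ℕ) (hb : b < n) :
    (∑ j : Fin n, if a ≤ (j : ℕ) ∧ (j : ℕ) < b then (1:ℕ) else 0) =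
      ∑ j : Fin n, if a < (j : ℕ) ∧ (j : ℕ) ≤ b then (1:ℕ) else 0 := by
  rw [Fin.sum_univ_eq_sum_range (fun x => if a ≤ x ∧ x < b then (1:ℕ) else 0),
      Fin.sum_univ_eq_sum_range (fun x => if a < x ∧ x ≤ b then (1:ℕ) else 0),
      ← Finset.card_filter, ← Finset.card_filter]
  have h1 : (Finset.range n).filter (fun x => a ≤ x ∧ x < b) = Finset.Ico a b := by
    ext x
    simp only [Finset.mem_filter, Finset.mem_range, Finset.mem_Ico]
    omega
  have h2 : (Finset.range n).filter (fun x => a < x ∧ x ≤ b) = Finset.Ioc a b := by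
    ext x
    simp only [Finset.mem_filter, Finset.mem_range, Finset.mem_Ioc]
    omega
  rw [h1, h2, Nat.card_Ico, Nat.card_Ioc]

/-- Symmetrization principle for double sums of indicators. -/
private lemma dsum_sym {n : ℕ} (c d : Fin n → Fin n → Prop)
    [∀ i j, Decidable (c i j)] [∀ i j, Decidable (d i j)]
    (h : ∀ i j, (if c i j then (1:ℕ) else 0) + (if c j i then 1 else 0)
      = (if d i j then 1 else 0) + (if d j i then 1 else 0)) :
    dsum n c = dsum n d := by
  have hswapc : dsum n c = ∑ i : Fin n, ∑ j : Fin n, if c j i then (1:ℕ) else 0 :=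
    Finset.sum_comm
  have hswapd : dsum n d = ∑ i : Fin n, ∑ j : Fin n, if d j i then (1:ℕ) else 0 :=
    Finset.sum_comm
  have e1 : dsum n c = ∑ i : Fin n, ∑ j : Fin n, if c i j then (1:ℕ) else 0 := rfl
  have e2 : dsum n d = ∑ i : Fin n, ∑ j : Fin n, if d i j then (1:ℕ) else 0 := rfl
  have key : ((∑ i : Fin n, ∑ j : Fin n, if c i j then (1:ℕ) else 0)
      + ∑ i : Fin n, ∑ j : Fin n, if c j i then (1:ℕ) else 0)
      = ((∑ i : Fin n, ∑ j : Fin n, if d i j then (1:ℕ) else 0)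
      + ∑ i : Fin n, ∑ j : Fin n, if d j i then (1:ℕ) else 0) := by
    rw [sum_sum_add, sum_sum_add]
    exact Finset.sum_congr rfl fun i _ => Finset.sum_congr rfl fun j _ => h i j
  omega

/-- Splitting a double sum along a condition on the second index. -/
private lemma dsum_split {n : ℕ} (c : Fin n → Fin n → Prop) (C : Fin n → Prop)
    [∀ i j, Decidable (c i j)] [DecidablePred C] :
    dsum n (fun i j => c i j ∧ C j) + dsum n (fun i j => c i j ∧ ¬ C j) = dsum n c := by
  unfold dsum
  rw [sum_sum_add]
  refine Finset.sum_congr rfl fun i _ => Finset.sum_congr rfl fun j _ => ?_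
  by_cases hc : c i j <;> by_cases hC : C j <;> simp [hc, hC]

/-- Per-second-index transformation of the right-hand side. -/
private lemma aux_R_eq_M {n : ℕ} (σ : Equiv.Perm (Fin n)) (C : Fin n → Prop)
    [DecidablePred C] :
    dsum n (fun i j => ((σ i : Fin n) : ℕ) < ((σ j : Fin n) : ℕ) ∧
        ((σ j : Fin n) : ℕ) ≤ (i : ℕ) ∧ C j) =
      dsum n (fun i j => (i : ℕ) < ((σ j : Fin n) : ℕ) ∧
        ((σ j : Fin n) : ℕ) ≤ ((σ i : Fin n) : ℕ) ∧ C j) := by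
  unfold dsum
  rw [Finset.sum_comm]
  rw [show (∑ i : Fin n, ∑ j : Fin n, if (i : ℕ) < ((σ j : Fin n) : ℕ) ∧
      ((σ j : Fin n) : ℕ) ≤ ((σ i : Fin n) : ℕ) ∧ C j then (1:ℕ) else 0)
      = ∑ j : Fin n, ∑ i : Fin n, if (i : ℕ) < ((σ j : Fin n) : ℕ) ∧
      ((σ j : Fin n) : ℕ) ≤ ((σ i : Fin n) : ℕ) ∧ C j then (1:ℕ) else 0 from
    Finset.sum_comm]
  refine Finset.sum_congr rfl fun j _ => ?_
  by_cases h : C j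
  · simp only [h, and_true]
    exact aux_perj n σ ((σ j : Fin n) : ℕ)
  · simp [h]

/-- Total count equality. -/
private lemma aux_total {n : ℕ} (σ : Equiv.Perm (Fin n)) :
    dsum n (fun i j => (i : ℕ) ≤ (j : ℕ) ∧ (j : ℕ) < ((σ i : Fin n) : ℕ)) =
      dsum n (fun i j => (i : ℕ) < ((σ j : Fin n) : ℕ) ∧
        ((σ j : Fin n) : ℕ) ≤ ((σ i : Fin n) : ℕ)) := by
  unfold dsum
  refine Finset.sum_congr rfl fun i _ => ?_
  have h1 : (∑ j : Fin n, if (i : ℕ) < ((σ j : Fin n) : ℕ) ∧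
      ((σ j : Fin n) : ℕ) ≤ ((σ i : Fin n) : ℕ) then (1:ℕ) else 0)
      = ∑ j : Fin n, if (i : ℕ) < (j : ℕ) ∧ (j : ℕ) ≤ ((σ i : Fin n) : ℕ) then (1:ℕ) else 0 :=
    Equiv.sum_comp σ
      (fun j : Fin n => if (i : ℕ) < (j : ℕ) ∧ (j : ℕ) ≤ ((σ i : Fin n) : ℕ) then (1:ℕ) else 0)
  rw [h1]
  exact aux_ico n (i : ℕ) ((σ i : Fin n) : ℕ) (σ i).isLt

open Classical in
private lemma aux_card {α : Type*} [Fintype α] (P : α → Prop) :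
    Nat.card {x // P x} = ∑ x : α, if P x then (1:ℕ) else 0 := by
  rw [Nat.card_eq_fintype_card, Fintype.card_subtype, Finset.card_filter]

open Classical in
/-- Lemma 2.24 of Sokal–Zeng, after Clarke. -/
theorem statement12 (n : ℕ) (σ : Equiv.Perm (Fin n)) :
    (Nat.card {p : Fin n × Fin n // p.1 ≤ p.2 ∧ p.2 < σ p.1 ∧ p.2 < σ p.2} =
        Nat.card {p : Fin n × Fin n // σ p.1 < σ p.2 ∧ σ p.2 ≤ p.1 ∧ p.2 < σ p.2}) ∧
      Nat.card {p : Fin n × Fin n // p.1 ≤ p.2 ∧ p.2 < σ p.1 ∧ σ p.2 ≤ p.2} =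
        Nat.card {p : Fin n × Fin n // σ p.1 < σ p.2 ∧ σ p.2 ≤ p.1 ∧ σ p.2 ≤ p.2} := by
  classical
  have convtac : ∀ (P : Fin n → Fin n → Prop) (Q : Fin n → Fin n → Prop)
      [∀ i j, Decidable (Q i j)] (h : ∀ i j, P i j ↔ Q i j),
      Nat.card {p : Fin n × Fin n // P p.1 p.2} = dsum n Q := by
    intro P Q _ h
    rw [aux_card, Fintype.sum_prod_type]
    exact Finset.sum_congr rfl fun i _ => Finset.sum_congr rfl fun j _ =>
      if_congr (h i j) rfl rfl
  -- the eight double-sum quantities, all phrased with ℕ-valued inequalities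
  have hS1 : Nat.card {p : Fin n × Fin n // p.1 ≤ p.2 ∧ p.2 < σ p.1 ∧ p.2 < σ p.2}
      = dsum n (fun i j => (i : ℕ) ≤ (j : ℕ) ∧ (j : ℕ) < ((σ i : Fin n) : ℕ) ∧
          (j : ℕ) < ((σ j : Fin n) : ℕ)) :=
    convtac (fun i j => i ≤ j ∧ j < σ i ∧ j < σ j) _ fun i j => Iff.rfl
  have hS2 : Nat.card {p : Fin n × Fin n // p.1 ≤ p.2 ∧ p.2 < σ p.1 ∧ σ p.2 ≤ p.2}
      = dsum n (fun i j => (i : ℕ) ≤ (j : ℕ) ∧ (j : ℕ) < ((σ i : Fin n) : ℕ) ∧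
          ((σ j : Fin n) : ℕ) ≤ (j : ℕ)) :=
    convtac (fun i j => i ≤ j ∧ j < σ i ∧ σ j ≤ j) _ fun i j => Iff.rfl
  have hR1 : Nat.card {p : Fin n × Fin n // σ p.1 < σ p.2 ∧ σ p.2 ≤ p.1 ∧ p.2 < σ p.2}
      = dsum n (fun i j => ((σ i : Fin n) : ℕ) < ((σ j : Fin n) : ℕ) ∧
          ((σ j : Fin n) : ℕ) ≤ (i : ℕ) ∧ (j : ℕ) < ((σ j : Fin n) : ℕ)) :=
    convtac (fun i j => σ i < σ j ∧ σ j ≤ i ∧ j < σ j) _ fun i j => Iff.rfl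
  have hR2 : Nat.card {p : Fin n × Fin n // σ p.1 < σ p.2 ∧ σ p.2 ≤ p.1 ∧ σ p.2 ≤ p.2}
      = dsum n (fun i j => ((σ i : Fin n) : ℕ) < ((σ j : Fin n) : ℕ) ∧
          ((σ j : Fin n) : ℕ) ≤ (i : ℕ) ∧ ((σ j : Fin n) : ℕ) ≤ (j : ℕ)) :=
    convtac (fun i j => σ i < σ j ∧ σ j ≤ i ∧ σ j ≤ j) _ fun i j => Iff.rfl
  -- RHS transformation (per second index)
  have hRM1 : dsum n (fun i j => ((σ i : Fin n) : ℕ) < ((σ j : Fin n) : ℕ) ∧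
        ((σ j : Fin n) : ℕ) ≤ (i : ℕ) ∧ (j : ℕ) < ((σ j : Fin n) : ℕ))
      = dsum n (fun i j => (i : ℕ) < ((σ j : Fin n) : ℕ) ∧
        ((σ j : Fin n) : ℕ) ≤ ((σ i : Fin n) : ℕ) ∧ (j : ℕ) < ((σ j : Fin n) : ℕ)) :=
    aux_R_eq_M σ (fun j => (j : ℕ) < ((σ j : Fin n) : ℕ))
  have hRM2 : dsum n (fun i j => ((σ i : Fin n) : ℕ) < ((σ j : Fin n) : ℕ) ∧
        ((σ j : Fin n) : ℕ) ≤ (i : ℕ) ∧ ((σ j : Fin n) : ℕ) ≤ (j : ℕ))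
      = dsum n (fun i j => (i : ℕ) < ((σ j : Fin n) : ℕ) ∧
        ((σ j : Fin n) : ℕ) ≤ ((σ i : Fin n) : ℕ) ∧ ((σ j : Fin n) : ℕ) ≤ (j : ℕ)) :=
    aux_R_eq_M σ (fun j => ((σ j : Fin n) : ℕ) ≤ (j : ℕ))
  -- symmetrization for the excedance part
  have hsym : dsum n (fun i j => (i : ℕ) ≤ (j : ℕ) ∧ (j : ℕ) < ((σ i : Fin n) : ℕ) ∧
        (j : ℕ) < ((σ j : Fin n) : ℕ))
      = dsum n (fun i j => (i : ℕ) < ((σ j : Fin n) : ℕ) ∧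
        ((σ j : Fin n) : ℕ) ≤ ((σ i : Fin n) : ℕ) ∧ (j : ℕ) < ((σ j : Fin n) : ℕ)) := by
    refine dsum_sym _ _ fun i j => ?_
    have hiff : ((i : ℕ) = (j : ℕ)) ↔ (((σ i : Fin n) : ℕ) = ((σ j : Fin n) : ℕ)) := by
      rw [Fin.val_eq_val, Fin.val_eq_val]
      exact (Equiv.apply_eq_iff_eq σ).symm
    split_ifs <;> omega
  -- splitting along excedance / non-excedance of the second index
  have hsplitS : dsum n (fun i j => ((i : ℕ) ≤ (j : ℕ) ∧ (j : ℕ) < ((σ i : Fin n) : ℕ)) ∧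
          (j : ℕ) < ((σ j : Fin n) : ℕ))
        + dsum n (fun i j => ((i : ℕ) ≤ (j : ℕ) ∧ (j : ℕ) < ((σ i : Fin n) : ℕ)) ∧
          ¬ ((j : ℕ) < ((σ j : Fin n) : ℕ)))
      = dsum n (fun i j => (i : ℕ) ≤ (j : ℕ) ∧ (j : ℕ) < ((σ i : Fin n) : ℕ)) :=
    dsum_split _ _
  have hsplitM : dsum n (fun i j => ((i : ℕ) < ((σ j : Fin n) : ℕ) ∧
          ((σ j : Fin n) : ℕ) ≤ ((σ i : Fin n) : ℕ)) ∧ (j : ℕ) < ((σ j : Fin n) : ℕ))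
        + dsum n (fun i j => ((i : ℕ) < ((σ j : Fin n) : ℕ) ∧
          ((σ j : Fin n) : ℕ) ≤ ((σ i : Fin n) : ℕ)) ∧ ¬ ((j : ℕ) < ((σ j : Fin n) : ℕ)))
      = dsum n (fun i j => (i : ℕ) < ((σ j : Fin n) : ℕ) ∧
          ((σ j : Fin n) : ℕ) ≤ ((σ i : Fin n) : ℕ)) :=
    dsum_split _ _
  -- reassociate the split summands to match the earlier forms
  have hS1a : dsum n (fun i j => ((i : ℕ) ≤ (j : ℕ) ∧ (j : ℕ) < ((σ i : Fin n) : ℕ)) ∧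
        (j : ℕ) < ((σ j : Fin n) : ℕ))
      = dsum n (fun i j => (i : ℕ) ≤ (j : ℕ) ∧ (j : ℕ) < ((σ i : Fin n) : ℕ) ∧
        (j : ℕ) < ((σ j : Fin n) : ℕ)) := dsum_congr fun i j => by omega
  have hS2a : dsum n (fun i j => ((i : ℕ) ≤ (j : ℕ) ∧ (j : ℕ) < ((σ i : Fin n) : ℕ)) ∧
        ¬ ((j : ℕ) < ((σ j : Fin n) : ℕ)))
      = dsum n (fun i j => (i : ℕ) ≤ (j : ℕ) ∧ (j : ℕ) < ((σ i : Fin n) : ℕ) ∧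
        ((σ j : Fin n) : ℕ) ≤ (j : ℕ)) := dsum_congr fun i j => by omega
  have hM1a : dsum n (fun i j => ((i : ℕ) < ((σ j : Fin n) : ℕ) ∧
        ((σ j : Fin n) : ℕ) ≤ ((σ i : Fin n) : ℕ)) ∧ (j : ℕ) < ((σ j : Fin n) : ℕ))
      = dsum n (fun i j => (i : ℕ) < ((σ j : Fin n) : ℕ) ∧
        ((σ j : Fin n) : ℕ) ≤ ((σ i : Fin n) : ℕ) ∧ (j : ℕ) < ((σ j : Fin n) : ℕ)) :=
    dsum_congr fun i j => by omega
  have hM2a : dsum n (fun i j => ((i : ℕ) < ((σ j : Fin n) : ℕ) ∧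
        ((σ j : Fin n) : ℕ) ≤ ((σ i : Fin n) : ℕ)) ∧ ¬ ((j : ℕ) < ((σ j : Fin n) : ℕ)))
      = dsum n (fun i j => (i : ℕ) < ((σ j : Fin n) : ℕ) ∧
        ((σ j : Fin n) : ℕ) ≤ ((σ i : Fin n) : ℕ) ∧ ((σ j : Fin n) : ℕ) ≤ (j : ℕ)) :=
    dsum_congr fun i j => by omega
  have htot := aux_total σ
  exact ⟨by omega, by omega⟩

end Paper
end
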